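/- arXiv:1710.04902 — 4 statements merged into one kernel-verified Lean document; each statement's English description precedes it below -/
import Mathlib

section
/- Let n ≥ 1 and for each i = 1,…,n let f_i be an increasing homeomorphism from ℝ onto an interval (a_i, b_i) ⊂ ℝ (with possibly infinite endpoints). Assume a_i > −∞ for at least one i and b_j < +∞ for at least one j. For t ∈ ℝ let F_t = τ_t∘f_n∘⋯∘τ_t∘f_1, where τ_t(x) = x+t. Then there exists a subset N ⊂ ℝ of finite Lebesgue measure, a countable union of closed intervals, such that for all t ∉ N the map F_t admits a unique fixed point in ℝ. -/
open Set Function Filter MeasureTheory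

/-- An orientation-preserving homeomorphism of `ℝ` commuting with `x ↦ x + 1`,
i.e. a lift of an orientation-preserving circle homeomorphism. -/
structure HomeoZR : Type where
  toFun : ℝ → ℝ
  invFun : ℝ → ℝ
  left_inv : Function.LeftInverse invFun toFun
  right_inv : Function.RightInverse invFun toFun
  strictMono : StrictMono toFun
  map_add_one : ∀ x, toFun (x + 1) = toFun x + 1

namespace HomeoZR

/-- The identity. -/
protected def id : HomeoZR :=
  ⟨_root_.id, _root_.id, fun _ => rfl, fun _ => rfl, strictMono_id, fun _ => rfl⟩

/-- Composition `f ∘ g`. -/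
protected def comp (f g : HomeoZR) : HomeoZR where
  toFun := f.toFun ∘ g.toFun
  invFun := g.invFun ∘ f.invFun
  left_inv := fun x => by
    show g.invFun (f.invFun (f.toFun (g.toFun x))) = x
    rw [f.left_inv, g.left_inv]
  right_inv := fun x => by
    show f.toFun (g.toFun (g.invFun (f.invFun x))) = x
    rw [g.right_inv, f.right_inv]
  strictMono := f.strictMono.comp g.strictMono
  map_add_one := fun x => by
    show f.toFun (g.toFun (x + 1)) = f.toFun (g.toFun x) + 1
    rw [g.map_add_one, f.map_add_one]

/-- Inverse. -/
protected def symm (f : HomeoZR) : HomeoZR where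
  toFun := f.invFun
  invFun := f.toFun
  left_inv := f.right_inv
  right_inv := f.left_inv
  strictMono := by
    intro x y hxy
    rcases lt_trichotomy (f.invFun x) (f.invFun y) with h | h | h
    · exact h
    · exact absurd (by rw [← f.right_inv x, ← f.right_inv y, h]) (ne_of_lt hxy)
    · have h2 := f.strictMono h
      rw [f.right_inv, f.right_inv] at h2
      exact absurd h2 (lt_asymm hxy)
  map_add_one := fun x => by
    have h1 : f.invFun (f.toFun (f.invFun x + 1)) = f.invFun (x + 1) := by
      rw [f.map_add_one, f.right_inv]
    rw [f.left_inv] at h1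
    exact h1.symm

/-- The associated monotone degree-one lift. -/
def toLift (f : HomeoZR) : CircleDeg1Lift :=
  ⟨⟨f.toFun, f.strictMono.monotone⟩, f.map_add_one⟩

/-- The translation number `rot̃(f)`. -/
noncomputable def transNum (f : HomeoZR) : ℝ :=
  f.toLift.translationNumber

/-- The canonical lift of the underlying circle homeomorphism: the lift whose
translation number lies in `[0,1)`, as a plain function. -/
noncomputable def canon (f : HomeoZR) : ℝ → ℝ :=
  fun x => f.toFun x - (⌊f.transNum⌋ : ℝ)

/-- The periodic points of the underlying circle homeomorphism, as a
`ℤ`-periodic subset of `ℝ`. -/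
def Per (f : HomeoZR) : Set ℝ :=
  {x | ∃ n : ℕ, 0 < n ∧ ∃ m : ℤ, f.toFun^[n] x = x + m}

/-- The fixed points of the underlying circle homeomorphism, as a subset of `ℝ`. -/
def FixS (f : HomeoZR) : Set ℝ :=
  {x | ∃ m : ℤ, f.toFun x = x + m}

/-- `q(f)`: the minimal period of the underlying circle homeomorphism. -/
noncomputable def q (f : HomeoZR) : ℕ :=
  sInf {n : ℕ | 0 < n ∧ ∃ x : ℝ, ∃ m : ℤ, f.toFun^[n] x = x + m}

/-- `p(f)`: the least `p ≥ 0` with `rot(f) = p / q(f)` mod `ℤ`. -/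
noncomputable def p (f : HomeoZR) : ℕ :=
  sInf {p : ℕ | ∃ m : ℤ, f.transNum = (p : ℝ) / (f.q : ℝ) + (m : ℝ)}

/-- Natural powers. -/
protected def npow (f : HomeoZR) : ℕ → HomeoZR
  | 0 => HomeoZR.id
  | n + 1 => (f.npow n).comp f

/-- Integer powers. -/
protected def zpow (f : HomeoZR) (k : ℤ) : HomeoZR :=
  if 0 ≤ k then f.npow k.toNat else f.symm.npow (-k).toNat

end HomeoZR

/-- `f` has rational rotation number. -/
def RatRot (f : HomeoZR) : Prop := ∃ r : ℚ, f.transNum = (r : ℝ)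

/-- `F` is a positive one-parameter family (one-parameter group) commuting with `f`:
for `t ≠ 0` the fixed set of `F t` is the frontier of `Per f`, and for `t > 0` the
canonical lift of `F t` moves every point off the frontier strictly to the right. -/
def PosFamily (f : HomeoZR) (F : ℝ → HomeoZR) : Prop :=
  (∀ s t, (F (s + t)).toFun = (F s).toFun ∘ (F t).toFun) ∧
  (∀ t, (F t).toFun ∘ f.toFun = f.toFun ∘ (F t).toFun) ∧
  (∀ t, t ≠ 0 → (F t).FixS = frontier f.Per) ∧
  (∀ t, 0 < t → ∀ x, x ∉ frontier f.Per → x < (F t).canon x)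

/-- `δ_{f,g}(x,t)`, where `F` is a positive one-parameter family commuting with `f`. -/
noncomputable def delta (F : ℝ → HomeoZR) (g : HomeoZR) (x t : ℝ) : ℝ :=
  ((F t).canon ∘ g.canon)^[g.q] x - x - (g.p : ℝ)

/-- Persistent periodic points. -/
def Pset (F : ℝ → HomeoZR) (g : HomeoZR) : Set ℝ := {x | ∀ t, delta F g x t = 0}

/-- Never-periodic points. -/
def Nset (F : ℝ → HomeoZR) (g : HomeoZR) : Set ℝ := {x | ∀ t, delta F g x t ≠ 0}

/-- Points periodic at a unique time. -/
def Uset (F : ℝ → HomeoZR) (g : HomeoZR) : Set ℝ := {x | ∃! t, delta F g x t = 0}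

/-- `x` has a finite orbit in the circle under the group generated by `f` and `g`. -/
def FiniteOrbit (f g : HomeoZR) (x : ℝ) : Prop :=
  ∃ S : Set ℝ, S.Finite ∧ x ∈ S ∧
    (∀ y ∈ S, ∃ z ∈ S, ∃ m : ℤ, f.toFun y = z + m) ∧
    (∀ y ∈ S, ∃ z ∈ S, ∃ m : ℤ, g.toFun y = z + m)

/-- `τ(f_1, …, f_n) = rot̃(f_n ∘ ⋯ ∘ f_1) − Σ rot̃(f_i)`. -/
noncomputable def tau (L : List HomeoZR) : ℝ :=
  (L.foldl (fun h u => u.comp h) HomeoZR.id).transNum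
    - (L.map HomeoZR.transNum).sum


section EHNhelpers
open Topology

namespace EHNaux


/-- fold a list of maps, interleaving translation by `t`. -/
def app (L : List (ℝ → ℝ)) (t x : ℝ) : ℝ := L.foldl (fun z g => g z + t) x

@[simp] lemma app_nil (t x : ℝ) : app [] t x = x := rfl

@[simp] lemma app_cons (g : ℝ → ℝ) (L : List (ℝ → ℝ)) (t x : ℝ) :
    app (g :: L) t x = app L t (g x + t) := rfl

lemma app_append (L₁ L₂ : List (ℝ → ℝ)) (t x : ℝ) :
    app (L₁ ++ L₂) t x = app L₂ t (app L₁ t x) := by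
  simp [app, List.foldl_append]

/-- all members monotone and continuous -/
def Good (L : List (ℝ → ℝ)) : Prop := ∀ g ∈ L, Monotone g ∧ Continuous g

lemma Good.tail {g : ℝ → ℝ} {L : List (ℝ → ℝ)} (h : Good (g :: L)) : Good L :=
  fun p hp => h p (List.mem_cons_of_mem _ hp)

lemma Good.head {g : ℝ → ℝ} {L : List (ℝ → ℝ)} (h : Good (g :: L)) :
    Monotone g ∧ Continuous g := h g (List.mem_cons_self)

lemma app_mono2 {L : List (ℝ → ℝ)} (hL : Good L) :
    ∀ {t t' x x' : ℝ}, t ≤ t' → x ≤ x' → app L t x ≤ app L t' x' := by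
  induction L with
  | nil => intro t t' x x' _ hx; simpa using hx
  | cons g L ih =>
    intro t t' x x' ht hx
    simp only [app_cons]
    exact ih hL.tail ht (by have := hL.head.1 hx; linarith)

lemma app_cont {L : List (ℝ → ℝ)} (hL : Good L) :
    Continuous (fun p : ℝ × ℝ => app L p.1 p.2) := by
  induction L with
  | nil => simpa using continuous_snd
  | cons g L ih =>
    have h1 : (fun p : ℝ × ℝ => app (g :: L) p.1 p.2)
        = (fun p : ℝ × ℝ => app L p.1 p.2) ∘ (fun p : ℝ × ℝ => (p.1, g p.2 + p.1)) := rfl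
    rw [h1]
    exact (ih hL.tail).comp
      (continuous_fst.prodMk ((hL.head.2.comp continuous_snd).add continuous_fst))

lemma psi_exists (fj : ℝ → ℝ) (hfj : Monotone fj) (M : List (ℝ → ℝ)) (hM : Good M)
    (ci : ℝ) (fi : ℝ → ℝ) (hci : ∀ y, ci ≤ fi y)
    (hcase : fi ∈ M ∨ ∀ y, ci ≤ fj y) :
    ∃ ψ : ℝ → ℝ, Monotone ψ ∧ (∀ t u, ψ t ≤ fj (app M t u) + t) ∧
      Tendsto ψ atTop atTop := by
  rcases hcase with h | h
  · obtain ⟨M₁, M₂, hMeq⟩ := List.append_of_mem h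
    have hGM₂ : Good M₂ := fun gf hgf => hM gf
      (by rw [hMeq]; exact List.mem_append_right _ (List.mem_cons_of_mem _ hgf))
    have hGM₁ : Good M₁ := fun gf hgf => hM gf
      (by rw [hMeq]; exact List.mem_append_left _ hgf)
    refine ⟨fun t => fj (app M₂ t (ci + t)) + t, ?_, ?_, ?_⟩
    · intro t t' ht
      exact add_le_add (hfj (app_mono2 hGM₂ ht (by linarith))) ht
    · intro t u
      have h1 : app M t u = app M₂ t (fi (app M₁ t u) + t) := by
        rw [hMeq, app_append]; rfl
    
      rw [h1]
      have h2 : ci + t ≤ fi (app M₁ t u) + t := by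
        have := hci (app M₁ t u); linarith
      exact add_le_add (hfj (app_mono2 hGM₂ le_rfl h2)) le_rfl
    · refine tendsto_atTop_mono' atTop ?_
        (tendsto_atTop_add_const_left atTop (fj (app M₂ 0 (ci + 0))) tendsto_id)
      filter_upwards [eventually_ge_atTop (0:ℝ)] with t ht
      exact add_le_add (hfj (app_mono2 hGM₂ ht (by linarith))) le_rfl
  · exact ⟨fun t => ci + t, fun t t' ht => by simpa using ht,
      fun t u => add_le_add (h _) le_rfl,
      tendsto_atTop_add_const_left atTop ci tendsto_id⟩

lemma upsi_exists (fi : ℝ → ℝ) (hfi : Monotone fi) (M : List (ℝ → ℝ)) (hM : Good M)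
    (Bj : ℝ) (fj : ℝ → ℝ) (hBj : ∀ y, fj y ≤ Bj)
    (hcase : fj ∈ M ∨ ∀ y, fi y ≤ Bj) :
    ∃ Uψ : ℝ → ℝ, Monotone Uψ ∧ (∀ t u, fi (app M t u) + t ≤ Uψ t) ∧
      Tendsto Uψ atBot atBot := by
  rcases hcase with h | h
  · obtain ⟨M₁, M₂, hMeq⟩ := List.append_of_mem h
    have hGM₂ : Good M₂ := fun gf hgf => hM gf
      (by rw [hMeq]; exact List.mem_append_right _ (List.mem_cons_of_mem _ hgf))
    have hGM₁ : Good M₁ := fun gf hgf => hM gf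
      (by rw [hMeq]; exact List.mem_append_left _ hgf)
    refine ⟨fun t => fi (app M₂ t (Bj + t)) + t, ?_, ?_, ?_⟩
    · intro t t' ht
      exact add_le_add (hfi (app_mono2 hGM₂ ht (by linarith))) ht
    · intro t u
      have h1 : app M t u = app M₂ t (fj (app M₁ t u) + t) := by
        rw [hMeq, app_append]; rfl
      rw [h1]
      have h2 : fj (app M₁ t u) + t ≤ Bj + t := by
        have := hBj (app M₁ t u); linarith
      exact add_le_add (hfi (app_mono2 hGM₂ le_rfl h2)) le_rfl
    · refine tendsto_atBot_mono' atBot ?_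
        (tendsto_atBot_add_const_left atBot (fi (app M₂ 0 (Bj + 0))) tendsto_id)
      filter_upwards [eventually_le_atBot (0:ℝ)] with t ht
      exact add_le_add (hfi (app_mono2 hGM₂ ht (by linarith))) le_rfl
  · exact ⟨fun t => Bj + t, fun t t' ht => by simpa using ht,
      fun t u => add_le_add (h _) le_rfl,
      tendsto_atBot_add_const_left atBot Bj tendsto_id⟩

lemma transfer (A B : List (ℝ → ℝ)) (gf : ℝ → ℝ) (t : ℝ)
    (h : ∃! u : ℝ, gf (app (B ++ A) t u) + t = u) :
    ∃! x : ℝ, app (A ++ gf :: B) t x = x := by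
  obtain ⟨u, hu, huniq⟩ := h
  have key : ∀ x, app (A ++ gf :: B) t x = app B t (gf (app A t x) + t) := by
    intro x
    rw [app_append]
    rfl
  have h1 : gf (app A t (app B t u)) + t = u := by
    rw [← app_append]; exact hu
  refine ⟨app B t u, ?_, ?_⟩
  · show app (A ++ gf :: B) t (app B t u) = app B t u
    rw [key, h1]
  · intro x hx
    have h2 : gf (app (B ++ A) t (gf (app A t x) + t)) + t = gf (app A t x) + t := by
      rw [app_append, ← key, hx]
    have h3 := huniq _ h2
    rw [← hx, key, h3]



lemma sun (g : ℝ → ℝ) (hgc : Continuous g) (Bs flow : ℝ) (ζ : ℝ → ℝ)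
    (hg_ge : ∀ u, u - Bs ≤ g u)
    (hdrop : ∀ p r, p ≤ r → g r ≤ g p → g p - g r ≤ ζ r - ζ p)
    (hζmono : ∀ p r, p ≤ r → g p ≤ g r → ζ p ≤ ζ r)
    (hζub : ∀ x, ζ x ≤ Bs)
    (hζlb : ∀ x, 0 ≤ x → flow ≤ ζ x) :
    ∃ a b : ℕ → ℝ, (∑' k, volume (Icc (a k) (b k))) < ⊤ ∧
      ∀ t u₁ u₂ : ℝ, 0 < u₁ → u₁ < u₂ → g u₁ = t → g u₂ = t →
        t ∈ ⋃ k, Icc (a k) (b k) := by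
  classical
  obtain ⟨q, hq⟩ := exists_surjective_nat ℚ
  set s : ℝ → ℝ := fun v => sSup (g '' Icc 0 v) with hs_def
  have hsub : ∀ v : ℝ, 0 ≤ v → ∀ x, x ∈ Icc (0:ℝ) v → g x ≤ s v := by
    intro v hv x hx
    exact le_csSup ((isCompact_Icc.image hgc).bddAbove) ⟨x, hx, rfl⟩
  have hsex : ∀ v : ℝ, 0 ≤ v → ∃ x ∈ Icc (0:ℝ) v, g x = s v := by
    intro v hv
    obtain ⟨x, hx, he⟩ := isCompact_Icc.exists_sSup_image_eq (nonempty_Icc.2 hv)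
      hgc.continuousOn
    exact ⟨x, hx, he.symm⟩
  have hsmono : ∀ v w : ℝ, 0 ≤ v → v ≤ w → s v ≤ s w := by
    intro v w hv hvw
    exact csSup_le_csSup ((isCompact_Icc.image hgc).bddAbove)
      ((nonempty_Icc.2 hv).image _) (image_mono (Icc_subset_Icc_right hvw))
  set al : ℝ → ℝ := fun v => sSup (Icc 0 v ∩ {x | s v ≤ g x}) with hal_def
  set be : ℝ → ℝ := fun v => sInf (Ici v ∩ {x | s v ≤ g x}) with hbe_def
  have hbddA : ∀ v : ℝ, BddAbove (Icc 0 v ∩ {x | s v ≤ g x}) :=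
    fun v => ⟨v, fun z hz => hz.1.2⟩
  have hbddB : ∀ v : ℝ, BddBelow (Ici v ∩ {x | s v ≤ g x}) :=
    fun v => ⟨v, fun z hz => hz.1⟩
  have hABspec : ∀ v : ℝ, 0 < v → g v < s v →
      0 ≤ al v ∧ al v < v ∧ g (al v) = s v ∧ (∀ w, al v < w → w ≤ v → g w < s v) ∧
      v < be v ∧ g (be v) = s v ∧ (∀ w, v ≤ w → w < be v → g w < s v) := by
    intro v hv0 hvE
    have hclA : IsClosed (Icc 0 v ∩ {x | s v ≤ g x}) :=
      isClosed_Icc.inter (isClosed_le continuous_const hgc)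
    have hneA : (Icc 0 v ∩ {x | s v ≤ g x}).Nonempty := by
      obtain ⟨x, hx, he⟩ := hsex v hv0.le
      exact ⟨x, hx, he.ge⟩
    have hmemA : al v ∈ Icc 0 v ∩ {x | s v ≤ g x} :=
      hclA.csSup_mem hneA (hbddA v)
    have haleq : g (al v) = s v := le_antisymm (hsub v hv0.le _ hmemA.1) hmemA.2
    have hallt : al v < v := by
      rcases lt_or_eq_of_le hmemA.1.2 with h | h
      · exact h
      · exfalso; rw [h] at haleq; exact absurd haleq (ne_of_lt hvE)
    have hα5 : ∀ w, al v < w → w ≤ v → g w < s v := by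
      intro w hw1 hw2
      by_contra hge'
      push_neg at hge'
      have hwA : w ∈ Icc 0 v ∩ {x | s v ≤ g x} :=
        ⟨⟨le_trans hmemA.1.1 hw1.le, hw2⟩, hge'⟩
      exact absurd (le_csSup (hbddA v) hwA) (not_le.2 hw1)
    have hclB : IsClosed (Ici v ∩ {x | s v ≤ g x}) :=
      isClosed_Ici.inter (isClosed_le continuous_const hgc)
    have hneB : (Ici v ∩ {x | s v ≤ g x}).Nonempty := by
      refine ⟨max v (s v + Bs), Set.mem_Ici.2 (le_max_left _ _), ?_⟩
      have := hg_ge (max v (s v + Bs))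
      have h2 : s v + Bs ≤ max v (s v + Bs) := le_max_right _ _
      simp only [mem_setOf_eq]; linarith
    have hmemB : be v ∈ Ici v ∩ {x | s v ≤ g x} :=
      hclB.csInf_mem hneB (hbddB v)
    have hbegt : v < be v := by
      rcases lt_or_eq_of_le (Set.mem_Ici.1 hmemB.1) with h | h
      · exact h
      · exfalso; rw [← h] at hmemB; exact absurd hmemB.2 (not_le.2 hvE)
    have hβ3 : ∀ w, v ≤ w → w < be v → g w < s v := by
      intro w h1 h2
      by_contra h
      push_neg at h
      exact absurd (csInf_le (hbddB v) ⟨h1, h⟩) (not_le.2 h2)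
    have hbeeq : g (be v) = s v := by
      refine le_antisymm ?_ hmemB.2
      by_contra h
      push_neg at h
      have hnb : {x | s v < g x} ∈ 𝓝 (be v) :=
        (isOpen_lt continuous_const hgc).mem_nhds h
      obtain ⟨ε, hε, hball⟩ := Metric.mem_nhds_iff.1 hnb
      set w := max v (be v - ε/2) with hw_def
      have hw1 : v ≤ w := le_max_left _ _
      have hw2 : w < be v := max_lt hbegt (by linarith)
      have hwb : w ∈ Metric.ball (be v) ε := by
        rw [Metric.mem_ball, Real.dist_eq, abs_lt]
        have : be v - ε/2 ≤ w := le_max_right _ _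
        constructor <;> linarith
      exact absurd (hball hwb) (not_lt.2 (hβ3 w hw1 hw2).le)
    exact ⟨hmemA.1.1, hallt, haleq, hα5, hbegt, hbeeq, hβ3⟩
  have halval : ∀ v x : ℝ, x ∈ Icc 0 v ∩ {y | s v ≤ g y} →
      (∀ z ∈ Icc 0 v ∩ {y | s v ≤ g y}, z ≤ x) → al v = x := by
    intro v x hx hub
    exact le_antisymm (csSup_le ⟨x, hx⟩ hub) (le_csSup (hbddA v) hx)
  have hbeval : ∀ v x : ℝ, x ∈ Ici v ∩ {y | s v ≤ g y} →
      (∀ z ∈ Ici v ∩ {y | s v ≤ g y}, x ≤ z) → be v = x := by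
    intro v x hx hlb
    exact le_antisymm (csInf_le (hbddB v) hx) (le_csInf ⟨x, hx⟩ hlb)
  have hC1 : ∀ v r : ℝ, 0 < v → g v < s v → al v < r → r < v → g r < s v →
      0 < r ∧ g r < s r ∧ al r = al v ∧ be r = be v ∧ s r = s v := by
    intro v r hv0 hvE h1 h2 h3
    obtain ⟨hal0, hallt, haleq, hα5, hbegt, hbeeq, hβ3⟩ := hABspec v hv0 hvE
    have hr0 : 0 < r := lt_of_le_of_lt hal0 h1
    have hsge : s v ≤ s r := by
      rw [← haleq]; exact hsub r hr0.le (al v) ⟨hal0, h1.le⟩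
    have hsrv : s r = s v := le_antisymm (hsmono r v hr0.le h2.le) hsge
    have hrE : g r < s r := by rw [hsrv]; exact h3
    have halr : al r = al v := by
      refine halval r (al v) ⟨⟨hal0, h1.le⟩, ?_⟩ ?_
      · rw [mem_setOf_eq, hsrv, haleq]
      · intro z hz
        by_contra hzc
        push_neg at hzc
        have := hα5 z hzc (le_trans hz.1.2 h2.le)
        rw [← hsrv] at this
        exact absurd hz.2 (not_le.2 this)
    have hber : be r = be v := by
      refine hbeval r (be v) ⟨le_trans h2.le hbegt.le, ?_⟩ ?_
      · rw [mem_setOf_eq, hsrv, hbeeq]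
      · intro z hz
        by_contra hzc
        push_neg at hzc
        rcases le_or_gt v z with h | h
        · have := hβ3 z h hzc
          rw [← hsrv] at this
          exact absurd hz.2 (not_le.2 this)
        · have := hα5 z (lt_of_lt_of_le h1 hz.1) h.le
          rw [← hsrv] at this
          exact absurd hz.2 (not_le.2 this)
    exact ⟨hr0, hrE, halr, hber, hsrv⟩
  have hC1' : ∀ v r : ℝ, 0 < v → g v < s v → v ≤ r → r < be v →
      0 < r ∧ g r < s r ∧ al r = al v ∧ be r = be v ∧ s r = s v := by
    intro v r hv0 hvE h1 h2
    obtain ⟨hal0, hallt, haleq, hα5, hbegt, hbeeq, hβ3⟩ := hABspec v hv0 hvE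
    have hgr : g r < s v := hβ3 r h1 h2
    have hr0 : 0 < r := lt_of_lt_of_le hv0 h1
    have hsge : s v ≤ s r := hsmono v r hv0.le h1
    have hsle : s r ≤ s v := by
      obtain ⟨x, hx, hxe⟩ := hsex r hr0.le
      rw [← hxe]
      rcases le_or_gt x v with h | h
      · exact hsub v hv0.le x ⟨hx.1, h⟩
      · exact (hβ3 x h.le (lt_of_le_of_lt hx.2 h2)).le
    have hsrv : s r = s v := le_antisymm hsle hsge
    have hrE : g r < s r := by rw [hsrv]; exact hgr
    have halr : al r = al v := by
      refine halval r (al v) ⟨⟨hal0, le_trans hallt.le h1⟩, ?_⟩ ?_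
      · rw [mem_setOf_eq, hsrv, haleq]
      · intro z hz
        by_contra hzc
        push_neg at hzc
        rcases le_or_gt z v with h | h
        · have := hα5 z hzc h
          rw [← hsrv] at this
          exact absurd hz.2 (not_le.2 this)
        · have := hβ3 z h.le (lt_of_le_of_lt hz.1.2 h2)
          rw [← hsrv] at this
          exact absurd hz.2 (not_le.2 this)
    have hber : be r = be v := by
      refine hbeval r (be v) ⟨le_of_lt h2, ?_⟩ ?_
      · rw [mem_setOf_eq, hsrv, hbeeq]
      · intro z hz
        by_contra hzc
        push_neg at hzc
        have := hβ3 z (le_trans h1 hz.1) hzc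
        rw [← hsrv] at this
        exact absurd hz.2 (not_le.2 this)
    exact ⟨hr0, hrE, halr, hber, hsrv⟩
  have hC2 : ∀ v w : ℝ, 0 < v → g v < s v → 0 < w → g w < s w → v ≤ w →
      (al v = al w ∧ be v = be w) ∨ be v ≤ al w := by
    intro v w hv0 hvE hw0 hwE hvw
    obtain ⟨hal0, hallt, haleq, hα5, hbegt, hbeeq, hβ3⟩ := hABspec v hv0 hvE
    by_cases hcase : w < be v
    · obtain ⟨_, _, halw, hbew, _⟩ := hC1' v w hv0 hvE hvw hcase
      exact Or.inl ⟨halw.symm, hbew.symm⟩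
    · push_neg at hcase
      right
      have hbe0 : (0:ℝ) ≤ be v := le_trans hv0.le hbegt.le
      obtain ⟨x, hx, hxe⟩ := hsex w hw0.le
      by_cases hxb : be v ≤ x
      · exact le_trans hxb (le_csSup (hbddA w) ⟨hx, hxe.ge⟩)
      · push_neg at hxb
        have hgx : g x ≤ s v := by
          rcases le_or_gt x v with h | h
          · exact hsub v hv0.le x ⟨hx.1, h⟩
          · exact (hβ3 x h.le hxb).le
        have hswv : s w = s v := by
          refine le_antisymm (by rw [← hxe]; exact hgx) ?_
          rw [← hbeeq]
          exact hsub w hw0.le (be v) ⟨hbe0, hcase⟩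
        refine le_csSup (hbddA w) ⟨⟨hbe0, hcase⟩, ?_⟩
        rw [mem_setOf_eq, hswv, hbeeq]
  set inE : ℝ → Prop := fun r => 0 < r ∧ g r < s r with hinE_def
  set OKp : ℕ → Prop := fun m => inE (q m) ∧
      ∀ l, l < m → ¬ (inE (q l) ∧ al (q l) = al (q m) ∧ be (q l) = be (q m)) with hOKp_def
  have hbs0 : ∀ m, ∃ x : ℝ, OKp m →
      x ∈ Icc (al (q m)) (be (q m)) ∧ ∀ y ∈ Icc (al (q m)) (be (q m)), g x ≤ g y := by
    intro m
    by_cases h : OKp m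
    · obtain ⟨hal0, hallt, _, _, hbegt, _, _⟩ := hABspec (q m) h.1.1 h.1.2
      obtain ⟨x, hx, hmin⟩ := isCompact_Icc.exists_isMinOn
        ⟨(q m : ℝ), ⟨hallt.le, hbegt.le⟩⟩ hgc.continuousOn
      exact ⟨x, fun _ => ⟨hx, fun y hy => hmin hy⟩⟩
    · exact ⟨0, fun h' => absurd h' h⟩
  choose bst hbst using hbs0
  set A' : ℕ → ℝ := fun m => if OKp m then sInf (g '' Icc (al (q m)) (be (q m))) else 1
    with hA'_def
  set B' : ℕ → ℝ := fun m => if OKp m then s (q m) else 0 with hB'_def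
  have hInfeq : ∀ m, OKp m → sInf (g '' Icc (al (q m)) (be (q m))) = g (bst m) := by
    intro m hm
    obtain ⟨hmem, hmin⟩ := hbst m hm
    refine le_antisymm (csInf_le ((isCompact_Icc.image hgc).bddBelow) ⟨bst m, hmem, rfl⟩) ?_
    refine le_csInf (⟨g (bst m), ⟨bst m, hmem, rfl⟩⟩) ?_
    rintro y ⟨x, hx, rfl⟩
    exact hmin x hx
  refine ⟨fun k => if k % 2 = 0 then A' (k/2) else g (q (k/2)),
          fun k => if k % 2 = 0 then B' (k/2) else g (q (k/2)), ?_, ?_⟩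
  · -- measure bound
    set c : ℕ → ℝ := fun m => if OKp m then ζ (al (q m)) else 0 with hc_def
    set d : ℕ → ℝ := fun m => if OKp m then ζ (bst m) else 0 with hd_def
    have hsummand : ∀ m, volume (Icc (A' m) (B' m)) ≤ volume (Ico (c m) (d m)) := by
      intro m
      by_cases hm : OKp m
      · obtain ⟨hal0, hallt, haleq, _, hbegt, _, _⟩ := hABspec (q m) hm.1.1 hm.1.2
        obtain ⟨hmem, hmin⟩ := hbst m hm
        have halbe : al (q m) ≤ be (q m) := le_trans hallt.le hbegt.le
        have h1 : g (bst m) ≤ g (al (q m)) := hmin _ ⟨le_refl _, halbe⟩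
        have h2 : g (al (q m)) - g (bst m) ≤ ζ (bst m) - ζ (al (q m)) :=
          hdrop (al (q m)) (bst m) hmem.1 h1
        simp only [hA'_def, hB'_def, hc_def, hd_def, if_pos hm]
        rw [hInfeq m hm, Real.volume_Icc, Real.volume_Ico]
        apply ENNReal.ofReal_le_ofReal
        rw [← haleq] at *
        linarith
      · simp only [hA'_def, hB'_def, if_neg hm]
        rw [Real.volume_Icc, ENNReal.ofReal_of_nonpos (by norm_num)]
        exact zero_le
    have hdistinct : ∀ m m', m ≠ m' → OKp m → OKp m' →
        ¬(al (q m) = al (q m') ∧ be (q m) = be (q m')) := by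
      intro m m' hne hm hm' hcon
      rcases lt_or_gt_of_ne hne with h | h
      · exact hm'.2 m h ⟨hm.1, hcon.1, hcon.2⟩
      · exact hm.2 m' h ⟨hm'.1, hcon.1.symm, hcon.2.symm⟩
    have hd_le_c : ∀ m m', OKp m → OKp m' → ((q m : ℝ)) ≤ (q m' : ℝ) →
        be (q m) ≤ al (q m') → d m ≤ c m' := by
      intro m m' hm hm' hqle hba
      obtain ⟨hmem, hmin⟩ := hbst m hm
      obtain ⟨hal0, hallt, haleq, _, hbegt, _, _⟩ := hABspec (q m) hm.1.1 hm.1.2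
      obtain ⟨hal0', hallt', haleq', _, _, _, _⟩ := hABspec (q m') hm'.1.1 hm'.1.2
      have hxle : bst m ≤ al (q m') := le_trans hmem.2 hba
      have hgle : g (bst m) ≤ g (al (q m')) := by
        have h1 : g (bst m) ≤ g (al (q m)) := hmin _ ⟨le_refl _, le_trans hallt.le hbegt.le⟩
        have h2 : s (q m) ≤ s (q m') := hsmono _ _ hm.1.1.le hqle
        rw [haleq']
        rw [haleq] at h1
        linarith
      simp only [hc_def, hd_def, if_pos hm, if_pos hm']
      exact hζmono _ _ hxle hgle
    have hdisj : Pairwise (Disjoint on fun m => Ico (c m) (d m)) := by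
      intro m m' hne
      by_cases hm : OKp m
      · by_cases hm' : OKp m'
        · have hcon := hdistinct m m' hne hm hm'
          have key : ∀ k k', OKp k → OKp k' → ((q k : ℝ)) < (q k' : ℝ) →
              ¬(al (q k) = al (q k') ∧ be (q k) = be (q k')) →
              Disjoint (Ico (c k) (d k)) (Ico (c k') (d k')) := by
            intro k k' hk hk' hlt hcc
            have := hC2 (q k) (q k') hk.1.1 hk.1.2 hk'.1.1 hk'.1.2 hlt.le
            rcases this with h | h
            · exact absurd h hcc
            · have hdc := hd_le_c k k' hk hk' hlt.le h
              rw [Set.disjoint_left]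
              intro x hx hx'
              exact absurd (lt_of_lt_of_le hx.2 (le_trans hdc hx'.1)) (lt_irrefl x)
          rcases lt_trichotomy ((q m : ℝ)) ((q m' : ℝ)) with h | h | h
          · exact key m m' hm hm' h hcon
          · exfalso
            have : q m = q m' := by exact_mod_cast h
            exact hcon ⟨by rw [this], by rw [this]⟩
          · exact (key m' m hm' hm h (fun hc => hcon ⟨hc.1.symm, hc.2.symm⟩)).symm
        · have : Ico (c m') (d m') = ∅ := by
            simp only [hc_def, hd_def, if_neg hm']
            exact Ico_self 0
          simp only [onFun, this]
          exact disjoint_empty _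
      · have : Ico (c m) (d m) = ∅ := by
          simp only [hc_def, hd_def, if_neg hm]
          exact Ico_self 0
        simp only [onFun, this]
        exact empty_disjoint _
    have hsubIco : ∀ m, Ico (c m) (d m) ⊆ Ico flow Bs := by
      intro m
      by_cases hm : OKp m
      · intro x hx
        simp only [hc_def, hd_def, if_pos hm] at hx
        obtain ⟨hal0, _, _, _, _, _, _⟩ := hABspec (q m) hm.1.1 hm.1.2
        exact ⟨le_trans (hζlb _ hal0) hx.1, lt_of_lt_of_le hx.2 (hζub _)⟩
      · simp only [hc_def, hd_def, if_neg hm, Ico_self]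
        exact empty_subset _
    have heven : ∀ m : ℕ,
        volume (Icc (if (2*m) % 2 = 0 then A' ((2*m)/2) else g (q ((2*m)/2)))
          (if (2*m) % 2 = 0 then B' ((2*m)/2) else g (q ((2*m)/2))))
        = volume (Icc (A' m) (B' m)) := by
      intro m
      have h1 : (2*m) % 2 = 0 := by omega
      have h2 : (2*m)/2 = m := by omega
      rw [h1, h2]
      simp
    have hodd : ∀ m : ℕ,
        volume (Icc (if (2*m+1) % 2 = 0 then A' ((2*m+1)/2) else g (q ((2*m+1)/2)))
          (if (2*m+1) % 2 = 0 then B' ((2*m+1)/2) else g (q ((2*m+1)/2)))) = 0 := by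
      intro m
      have h1 : ¬((2*m+1) % 2 = 0) := by omega
      rw [if_neg h1, if_neg h1, Real.volume_Icc]
      simp
    rw [← tsum_even_add_odd ENNReal.summable ENNReal.summable]
    rw [tsum_congr heven, tsum_congr hodd, tsum_zero, add_zero]
    calc ∑' m, volume (Icc (A' m) (B' m))
        ≤ ∑' m, volume (Ico (c m) (d m)) := ENNReal.tsum_le_tsum hsummand
      _ = volume (⋃ m, Ico (c m) (d m)) :=
          (measure_iUnion hdisj (fun m => measurableSet_Ico)).symm
      _ ≤ volume (Ico flow Bs) := measure_mono (iUnion_subset hsubIco)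
      _ < ⊤ := by rw [Real.volume_Ico]; exact ENNReal.ofReal_lt_top
  · -- coverage
    intro t u₁ u₂ h0 hlt hg1 hg2
    by_cases hflat : ∀ w, u₁ < w → w < u₂ → g w = t
    · obtain ⟨r, hr1, hr2⟩ := exists_rat_btwn hlt
      obtain ⟨m, hm⟩ := hq r
      refine mem_iUnion.2 ⟨2*m+1, ?_⟩
      have h1 : ¬((2*m+1) % 2 = 0) := by omega
      have h2 : (2*m+1)/2 = m := by omega
      show t ∈ Icc (if (2*m+1) % 2 = 0 then A' ((2*m+1)/2) else g (q ((2*m+1)/2)))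
        (if (2*m+1) % 2 = 0 then B' ((2*m+1)/2) else g (q ((2*m+1)/2)))
      rw [if_neg h1, if_neg h1, h2, hm]
      have := hflat r hr1 hr2
      exact ⟨this.le, this.ge⟩
    · push_neg at hflat
      obtain ⟨w, hw1, hw2, hwne⟩ := hflat
      have main : ∃ r : ℚ, ((0:ℝ) < r ∧ g r < s r) ∧
          sInf (g '' Icc (al r) (be r)) ≤ t ∧ t ≤ s r := by
        rcases lt_or_gt_of_ne hwne with hwlt | hwgt
        · -- dip
          have hO : IsOpen (Ioo u₁ u₂ ∩ {x | g x < t}) :=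
            isOpen_Ioo.inter (isOpen_lt hgc continuous_const)
          obtain ⟨ε, hε, hball⟩ := Metric.isOpen_iff.1 hO w ⟨⟨hw1, hw2⟩, hwlt⟩
          obtain ⟨r, hr1, hr2⟩ := exists_rat_btwn (show w - ε < w by linarith)
          have hrO : (r:ℝ) ∈ Ioo u₁ u₂ ∩ {x | g x < t} := by
            apply hball
            rw [Metric.mem_ball, Real.dist_eq, abs_lt]
            constructor <;> linarith
          have hr0 : (0:ℝ) < r := lt_trans h0 hrO.1.1
          have hts : t ≤ s r := by
            rw [← hg1]
            exact hsub r hr0.le u₁ ⟨h0.le, hrO.1.1.le⟩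
          have hinE : (0:ℝ) < r ∧ g r < s r :=
            ⟨hr0, lt_of_lt_of_le hrO.2 hts⟩
          obtain ⟨_, hallt, _, _, hbegt, _, _⟩ := hABspec r hinE.1 hinE.2
          refine ⟨r, hinE, ?_, hts⟩
          calc sInf (g '' Icc (al r) (be r))
              ≤ g r := csInf_le ((isCompact_Icc.image hgc).bddBelow)
                ⟨(r:ℝ), ⟨hallt.le, hbegt.le⟩, rfl⟩
            _ ≤ t := hrO.2.le
        · -- bump
          have hu20 : 0 < u₂ := lt_trans h0 hlt
          have hw0 : (0:ℝ) ≤ w := le_trans h0.le (le_of_lt hw1)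
          have hu2E : g u₂ < s u₂ := by
            rw [hg2]
            exact lt_of_lt_of_le hwgt (hsub u₂ hu20.le w ⟨hw0, hw2.le⟩)
          obtain ⟨hal0, hallt, haleq, hα5, hbegt, hbeeq, hβ3⟩ := hABspec u₂ hu20 hu2E
          have hnb : {x | g x < s u₂} ∈ 𝓝 u₂ :=
            (isOpen_lt hgc continuous_const).mem_nhds hu2E
          obtain ⟨ε, hε, hball⟩ := Metric.mem_nhds_iff.1 hnb
          have hlo : max (al u₂) (u₂ - ε/2) < u₂ := max_lt hallt (by linarith)
          obtain ⟨r, hr1, hr2⟩ := exists_rat_btwn hlo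
          have hrb : g r < s u₂ := by
            apply hball
            rw [Metric.mem_ball, Real.dist_eq, abs_lt]
            have h3 : u₂ - ε/2 < r := lt_of_le_of_lt (le_max_right _ _) hr1
            constructor <;> linarith
          have hral : al u₂ < r := lt_of_le_of_lt (le_max_left _ _) hr1
          obtain ⟨hr0, hrE, halr, hber, hsr⟩ := hC1 u₂ r hu20 hu2E hral hr2 hrb
          refine ⟨r, ⟨hr0, hrE⟩, ?_, ?_⟩
          · rw [halr, hber, ← hg2]
            exact csInf_le ((isCompact_Icc.image hgc).bddBelow)
              ⟨u₂, ⟨hallt.le, hbegt.le⟩, rfl⟩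
          · rw [hsr, ← hg2]
            exact hu2E.le
      obtain ⟨r, hrE, hrlo, hrhi⟩ := main
      obtain ⟨m₀, hm₀⟩ := hq r
      have hPex : ∃ m, ((0:ℝ) < q m ∧ g (q m) < s (q m)) ∧
          al (q m) = al r ∧ be (q m) = be r := ⟨m₀, by rw [hm₀]; exact ⟨hrE, rfl, rfl⟩⟩
      obtain ⟨hmE, hmal, hmbe⟩ := Nat.find_spec hPex
      have hOK : OKp (Nat.find hPex) := by
        refine ⟨hmE, fun l hl hcon => Nat.find_min hPex hl ?_⟩
        exact ⟨hcon.1, by rw [hcon.2.1, hmal], by rw [hcon.2.2, hmbe]⟩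
      refine mem_iUnion.2 ⟨2*(Nat.find hPex), ?_⟩
      have h1 : (2*(Nat.find hPex)) % 2 = 0 := by omega
      have h2 : (2*(Nat.find hPex))/2 = Nat.find hPex := by omega
      show t ∈ Icc
        (if (2*(Nat.find hPex)) % 2 = 0 then A' ((2*(Nat.find hPex))/2) else g (q ((2*(Nat.find hPex))/2)))
        (if (2*(Nat.find hPex)) % 2 = 0 then B' ((2*(Nat.find hPex))/2) else g (q ((2*(Nat.find hPex))/2)))
      rw [if_pos h1, if_pos h1, h2]
      simp only [hA'_def, hB'_def, if_pos hOK]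
      constructor
      · rw [hmal, hmbe]; exact hrlo
      · have ha1 : g (al (q (Nat.find hPex))) = s (q (Nat.find hPex)) :=
          (hABspec (q (Nat.find hPex)) hmE.1 hmE.2).2.2.1
        have ha2 : g (al r) = s r := (hABspec r hrE.1 hrE.2).2.2.1
        rw [← ha1, hmal, ha2]
        exact hrhi




lemma core (f : ℝ → ℝ) (Φ : ℝ → ℝ → ℝ) (Bs : ℝ)
    (hfm : StrictMono f) (hfc : Continuous f) (hfB : ∀ y, f y ≤ Bs)
    (hΦm : ∀ {t t' u u' : ℝ}, t ≤ t' → u ≤ u' → Φ t u ≤ Φ t' u')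
    (hΦc : Continuous fun p : ℝ × ℝ => Φ p.1 p.2)
    (ψ : ℝ → ℝ) (hψm : Monotone ψ) (hψle : ∀ t u, ψ t ≤ f (Φ t u) + t)
    (hψtop : Tendsto ψ atTop atTop)
    (hsun : ∀ (g : ℝ → ℝ), Continuous g → ∀ (flow : ℝ) (ζ : ℝ → ℝ),
      (∀ u, u - Bs ≤ g u) →
      (∀ p r, p ≤ r → g r ≤ g p → g p - g r ≤ ζ r - ζ p) →
      (∀ p r, p ≤ r → g p ≤ g r → ζ p ≤ ζ r) →
      (∀ x, ζ x ≤ Bs) → (∀ x, 0 ≤ x → flow ≤ ζ x) →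
      ∃ a b : ℕ → ℝ, (∑' k, volume (Icc (a k) (b k))) < ⊤ ∧
        ∀ t u₁ u₂ : ℝ, 0 < u₁ → u₁ < u₂ → g u₁ = t → g u₂ = t →
          t ∈ ⋃ k, Icc (a k) (b k)) :
    ∃ (T₀ : ℝ) (a b : ℕ → ℝ), (∑' k, volume (Icc (a k) (b k))) < ⊤ ∧
      ∀ t, T₀ < t → t ∉ ⋃ k, Icc (a k) (b k) → ∃! u : ℝ, f (Φ t u) + t = u := by
  classical
  have hRcont_t : ∀ u, Continuous fun t : ℝ => f (Φ t u) + t := fun u =>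
    ((hfc.comp (hΦc.comp (continuous_id.prodMk continuous_const))).add continuous_id)
  have hRcont_u : ∀ t, Continuous fun u : ℝ => f (Φ t u) + t := fun t =>
    ((hfc.comp (hΦc.comp (continuous_const.prodMk continuous_id))).add continuous_const)
  have hmono_t' : ∀ u, StrictMono (fun t : ℝ => f (Φ t u) + t) := fun u a b h =>
    add_lt_add_of_le_of_lt (hfm.monotone (hΦm h.le le_rfl)) h
  have hRle : ∀ t u : ℝ, f (Φ t u) + t ≤ Bs + t := fun t u =>
    add_le_add_left (hfB _) t
  have hex : ∀ u : ℝ, ∃! t, f (Φ t u) + t = u := by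
    intro u
    obtain ⟨t₂, ht₂⟩ := (hψtop.eventually_gt_atTop u).exists
    set t₁ := u - Bs - 1 with ht₁def
    have h₁ : f (Φ t₁ u) + t₁ < u := lt_of_le_of_lt (hRle t₁ u) (by rw [ht₁def]; linarith)
    have h₂ : u < f (Φ t₂ u) + t₂ := lt_of_lt_of_le ht₂ (hψle t₂ u)
    have h12 : t₁ ≤ t₂ := by
      by_contra hc
      push_neg at hc
      have := hmono_t' u hc
      dsimp only at this
      linarith
    obtain ⟨t, _, ht⟩ := intermediate_value_Icc h12 ((hRcont_t u).continuousOn)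
      ⟨h₁.le, h₂.le⟩
    exact ⟨t, ht, fun y hy => (hmono_t' u).injective (hy.trans ht.symm)⟩
  choose g hg1 hg2 using hex
  have hlt_iff : ∀ t u : ℝ, f (Φ t u) + t < u ↔ t < g u := by
    intro t u
    constructor
    · intro h
      by_contra hc
      push_neg at hc
      have := (hmono_t' u).monotone hc
      rw [hg1 u] at this
      linarith
    · intro h
      have := hmono_t' u h
      dsimp only at this
      rw [hg1 u] at this
      exact this
  have hgt_iff : ∀ t u : ℝ, u < f (Φ t u) + t ↔ g u < t := by
    intro t u
    constructor
    · intro h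
      by_contra hc
      push_neg at hc
      have := (hmono_t' u).monotone hc
      rw [hg1 u] at this
      linarith
    · intro h
      have := hmono_t' u h
      dsimp only at this
      rw [hg1 u] at this
      exact this
  have hgcont : Continuous g := by
    rw [continuous_iff_continuousAt]
    intro u₀
    rw [ContinuousAt, tendsto_order]
    constructor
    · intro b hb
      have hb' : f (Φ b u₀) + b < u₀ := (hlt_iff b u₀).2 hb
      have hme : {u : ℝ | f (Φ b u) + b < u} ∈ 𝓝 u₀ :=
        (isOpen_lt (hRcont_u b) continuous_id).mem_nhds hb'
      exact Filter.eventually_of_mem hme (fun u hu => (hlt_iff b u).1 hu)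
    · intro b hb
      have hb' : u₀ < f (Φ b u₀) + b := (hgt_iff b u₀).2 hb
      have hme : {u : ℝ | u < f (Φ b u) + b} ∈ 𝓝 u₀ :=
        (isOpen_lt continuous_id (hRcont_u b)).mem_nhds hb'
      exact Filter.eventually_of_mem hme (fun u hu => (hgt_iff b u).1 hu)
  have hg_ge : ∀ u, u - Bs ≤ g u := by
    intro u
    have h1 := hg1 u
    have h2 := hRle (g u) u
    linarith
  have hdrop : ∀ p r : ℝ, p ≤ r → g r ≤ g p →
      g p - g r ≤ (f (Φ (g r) r)) - (f (Φ (g p) p)) := by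
    intro p r h1 h2
    have hp := hg1 p
    have hr := hg1 r
    linarith
  have hζmono : ∀ p r : ℝ, p ≤ r → g p ≤ g r → f (Φ (g p) p) ≤ f (Φ (g r) r) :=
    fun p r h1 h2 => hfm.monotone (hΦm h2 h1)
  have hζub : ∀ x : ℝ, f (Φ (g x) x) ≤ Bs := fun x => hfB _
  have hζlb : ∀ x : ℝ, 0 ≤ x → f (Φ (-Bs) 0) ≤ f (Φ (g x) x) := by
    intro x hx
    refine hfm.monotone (hΦm ?_ hx)
    have := hg_ge x
    linarith
  obtain ⟨a, b, hvol, hcov⟩ := hsun g hgcont (f (Φ (-Bs) 0)) (fun x => f (Φ (g x) x))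
    hg_ge hdrop hζmono hζub hζlb
  obtain ⟨T₀, hT₀⟩ := (hψtop.eventually_gt_atTop 0).exists
  refine ⟨T₀, a, b, hvol, ?_⟩
  intro t ht hnmem
  have hexu : ∃ u : ℝ, f (Φ t u) + t = u := by
    set u₁ := ψ t - 1 with hu₁def
    set u₂ := Bs + t + 1 with hu₂def
    have h1 : u₁ < f (Φ t u₁) + t := lt_of_lt_of_le (by rw [hu₁def]; linarith)
      (hψle t u₁)
    have h2 : f (Φ t u₂) + t < u₂ := lt_of_le_of_lt (hRle t u₂) (by rw [hu₂def]; linarith)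
    have h12 : u₁ ≤ u₂ := by
      have ha := hψle t 0
      have hb := hRle t 0
      rw [hu₁def, hu₂def]
      linarith
    have hcont : ContinuousOn (fun u : ℝ => f (Φ t u) + t - u) (Icc u₁ u₂) :=
      ((hRcont_u t).sub continuous_id).continuousOn
    have hmem : (0:ℝ) ∈ Icc ((fun u : ℝ => f (Φ t u) + t - u) u₂)
        ((fun u : ℝ => f (Φ t u) + t - u) u₁) := by
      constructor
      · simp only []
        linarith
      · simp only []
        linarith
    obtain ⟨u, _, hu0⟩ := intermediate_value_Icc' h12 hcont hmem
    exact ⟨u, by simp only [] at hu0; linarith⟩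
  obtain ⟨u, hu⟩ := hexu
  refine ⟨u, hu, ?_⟩
  intro y hy
  by_contra hne
  have hgu : g u = t := (hg2 u t hu).symm
  have hgy : g y = t := (hg2 y t hy).symm
  have hpos : ∀ u' : ℝ, g u' = t → 0 < u' := by
    intro u' h'
    by_contra hle
    push_neg at hle
    have h1 := hg1 u'
    rw [h'] at h1
    have h2 := hψle t u'
    have h3 := hψm ht.le
    linarith
  rcases lt_or_gt_of_ne hne with h | h
  · exact hnmem (hcov t y u (hpos y hgy) h hgy hgu)
  · exact hnmem (hcov t u y (hpos u hgu) h hgu hgy)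


end EHNaux
end EHNhelpers

open EHNaux in
/-- Lemma 4.8, EHN-type lemma. For increasing homeomorphisms
`f_i : ℝ → (a_i, b_i)` with some `a_i > -∞` and some `b_j < +∞`, outside a countable
union of closed intervals of finite total Lebesgue measure, the composition
`F_t = τ_t ∘ f_n ∘ ⋯ ∘ τ_t ∘ f_1` has a unique fixed point. -/
theorem EHN_unique_fixed_point (n : ℕ) (hn : 1 ≤ n) (f : Fin n → ℝ → ℝ)
    (hmono : ∀ i, StrictMono (f i)) (hcont : ∀ i, Continuous (f i))
    (hlow : ∃ i, BddBelow (Set.range (f i)))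
    (hhigh : ∃ j, BddAbove (Set.range (f j))) :
    ∃ a b : ℕ → ℝ,
      MeasureTheory.volume (⋃ k, Set.Icc (a k) (b k)) < ⊤ ∧
      ∀ t : ℝ, t ∉ ⋃ k, Set.Icc (a k) (b k) →
        ∃! x : ℝ,
          (List.ofFn fun i : Fin n => fun z : ℝ => f i z + t).foldl
            (fun z g => g z) x = x := by
  classical
  obtain ⟨i, hiB⟩ := hlow
  obtain ⟨j, hjB⟩ := hhigh
  obtain ⟨ci, hci'⟩ := hiB
  have hci : ∀ y, ci ≤ f i y := fun y => hci' ⟨y, rfl⟩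
  obtain ⟨Bj, hBj'⟩ := hjB
  have hBj : ∀ y, f j y ≤ Bj := fun y => hBj' ⟨y, rfl⟩
  have hGood : Good (List.ofFn f) := by
    intro gf hgf
    rw [List.mem_ofFn] at hgf
    obtain ⟨k, hk⟩ := hgf
    rw [← hk]
    exact ⟨(hmono k).monotone, hcont k⟩
  have hfold : ∀ (t x : ℝ), (List.ofFn fun i : Fin n => fun z : ℝ => f i z + t).foldl
      (fun z g => g z) x = app (List.ofFn f) t x := by
    intro t x
    have h1 : (List.ofFn fun i : Fin n => fun z : ℝ => f i z + t)
        = (List.ofFn f).map (fun g (z : ℝ) => g z + t) := by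
      rw [List.map_ofFn]
      rfl
    rw [h1, List.foldl_map]
    rfl
  -- rotation at j (for t large)
  have hjmem : f j ∈ List.ofFn f := List.mem_ofFn.2 ⟨j, rfl⟩
  obtain ⟨A₁, B₁, hAB₁⟩ := List.append_of_mem hjmem
  have hGM₁ : Good (B₁ ++ A₁) := by
    intro gf hgf
    rcases List.mem_append.1 hgf with h | h
    · exact hGood gf (by rw [hAB₁]; exact List.mem_append_right _ (List.mem_cons_of_mem _ h))
    · exact hGood gf (by rw [hAB₁]; exact List.mem_append_left _ h)
  have hicase : f i ∈ (B₁ ++ A₁) ∨ (∀ y, ci ≤ f j y) := by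
    have hmemi : f i ∈ List.ofFn f := List.mem_ofFn.2 ⟨i, rfl⟩
    rw [hAB₁] at hmemi
    rcases List.mem_append.1 hmemi with h | h
    · exact Or.inl (List.mem_append_right _ h)
    · rcases List.mem_cons.1 h with h' | h'
      · right; intro y; rw [← h']; exact hci y
      · exact Or.inl (List.mem_append_left _ h')
  obtain ⟨ψ, hψm, hψle, hψtop⟩ := psi_exists (f j) (hmono j).monotone (B₁ ++ A₁) hGM₁
    ci (f i) hci hicase
  obtain ⟨T₀, aR, bR, hvR, huR⟩ := core (f j) (fun t u => app (B₁ ++ A₁) t u) Bj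
    (hmono j) (hcont j) hBj (fun h1 h2 => app_mono2 hGM₁ h1 h2) (app_cont hGM₁)
    ψ hψm hψle hψtop
    (fun g hgc flow ζ h1 h2 h3 h4 h5 => sun g hgc Bj flow ζ h1 h2 h3 h4 h5)
  -- rotation at i (for t very negative), mirrored
  have himem : f i ∈ List.ofFn f := List.mem_ofFn.2 ⟨i, rfl⟩
  obtain ⟨A₂, B₂, hAB₂⟩ := List.append_of_mem himem
  have hGM₂ : Good (B₂ ++ A₂) := by
    intro gf hgf
    rcases List.mem_append.1 hgf with h | h
    · exact hGood gf (by rw [hAB₂]; exact List.mem_append_right _ (List.mem_cons_of_mem _ h))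
    · exact hGood gf (by rw [hAB₂]; exact List.mem_append_left _ h)
  have hjcase : f j ∈ (B₂ ++ A₂) ∨ (∀ y, f i y ≤ Bj) := by
    have hmemj : f j ∈ List.ofFn f := List.mem_ofFn.2 ⟨j, rfl⟩
    rw [hAB₂] at hmemj
    rcases List.mem_append.1 hmemj with h | h
    · exact Or.inl (List.mem_append_right _ h)
    · rcases List.mem_cons.1 h with h' | h'
      · right; intro y; rw [← h']; exact hBj y
      · exact Or.inl (List.mem_append_left _ h')
  obtain ⟨Uψ, hUm, hUge, hUbot⟩ := upsi_exists (f i) (hmono i).monotone (B₂ ++ A₂) hGM₂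
    Bj (f j) hBj hjcase
  have hftm : StrictMono (fun y : ℝ => -(f i (-y))) := fun x y h =>
    neg_lt_neg (hmono i (neg_lt_neg h))
  have hftc : Continuous (fun y : ℝ => -(f i (-y))) := ((hcont i).comp continuous_neg).neg
  have hftB : ∀ y : ℝ, -(f i (-y)) ≤ -ci := fun y => neg_le_neg (hci _)
  have hPhim : ∀ {s s' v v' : ℝ}, s ≤ s' → v ≤ v' →
      -(app (B₂ ++ A₂) (-s) (-v)) ≤ -(app (B₂ ++ A₂) (-s') (-v')) := by
    intro s s' v v' hs hv
    exact neg_le_neg (app_mono2 hGM₂ (neg_le_neg hs) (neg_le_neg hv))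
  have hPhic : Continuous (fun p : ℝ × ℝ => -(app (B₂ ++ A₂) (-p.1) (-p.2))) := by
    have := (app_cont hGM₂).comp
      ((continuous_neg.comp continuous_fst).prodMk (continuous_neg.comp continuous_snd))
    exact this.neg
  have hpsm : Monotone (fun s : ℝ => -(Uψ (-s))) := fun s s' h =>
    neg_le_neg (hUm (neg_le_neg h))
  have hpsle : ∀ s v : ℝ, -(Uψ (-s)) ≤ (fun y : ℝ => -(f i (-y))) (-(app (B₂ ++ A₂) (-s) (-v))) + s := by
    intro s v
    have := hUge (-s) (-v)
    simp only [neg_neg]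
    linarith
  have hpstop : Tendsto (fun s : ℝ => -(Uψ (-s))) atTop atTop := by
    have h1 : Tendsto (fun s : ℝ => Uψ (-s)) atTop atBot :=
      hUbot.comp tendsto_neg_atTop_atBot
    exact tendsto_neg_atBot_atTop.comp h1
  obtain ⟨S₀, aL, bL, hvL, huL⟩ := core (fun y : ℝ => -(f i (-y)))
    (fun s v => -(app (B₂ ++ A₂) (-s) (-v))) (-ci)
    hftm hftc hftB (fun hs hv => hPhim hs hv) hPhic
    (fun s => -(Uψ (-s))) hpsm hpsle hpstop
    (fun g hgc flow ζ h1 h2 h3 h4 h5 => sun g hgc (-ci) flow ζ h1 h2 h3 h4 h5)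
  refine ⟨fun k => if k % 3 = 0 then aR (k/3) else if k % 3 = 1 then -(bL (k/3))
            else if k = 2 then -S₀ else 1,
          fun k => if k % 3 = 0 then bR (k/3) else if k % 3 = 1 then -(aL (k/3))
            else if k = 2 then T₀ else 0, ?_, ?_⟩
  · -- volume bound
    have hsub3 : (⋃ k, Icc (if k % 3 = 0 then aR (k/3) else if k % 3 = 1 then -(bL (k/3))
            else if k = 2 then -S₀ else 1)
          (if k % 3 = 0 then bR (k/3) else if k % 3 = 1 then -(aL (k/3))
            else if k = 2 then T₀ else 0))
        ⊆ (⋃ m, Icc (aR m) (bR m)) ∪ ((⋃ m, Icc (-(bL m)) (-(aL m))) ∪ Icc (-S₀) T₀) := by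
      refine iUnion_subset ?_
      intro k x hx
      by_cases h0 : k % 3 = 0
      · rw [if_pos h0, if_pos h0] at hx
        exact Or.inl (mem_iUnion.2 ⟨k/3, hx⟩)
      · by_cases h1 : k % 3 = 1
        · rw [if_neg h0, if_pos h1, if_neg h0, if_pos h1] at hx
          exact Or.inr (Or.inl (mem_iUnion.2 ⟨k/3, hx⟩))
        · by_cases h2 : k = 2
          · rw [if_neg h0, if_neg h1, if_pos h2, if_neg h0, if_neg h1, if_pos h2] at hx
            exact Or.inr (Or.inr hx)
          · rw [if_neg h0, if_neg h1, if_neg h2, if_neg h0, if_neg h1, if_neg h2] at hx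
            exact absurd (le_trans hx.1 hx.2) (by norm_num)
    refine lt_of_le_of_lt (measure_mono hsub3) ?_
    refine lt_of_le_of_lt (measure_union_le _ _) ?_
    refine ENNReal.add_lt_top.2 ⟨lt_of_le_of_lt (measure_iUnion_le _) hvR, ?_⟩
    refine lt_of_le_of_lt (measure_union_le _ _) ?_
    refine ENNReal.add_lt_top.2 ⟨?_, ?_⟩
    · refine lt_of_le_of_lt (measure_iUnion_le _) ?_
      have heq : ∀ m : ℕ, volume (Icc (-(bL m)) (-(aL m))) = volume (Icc (aL m) (bL m)) := by
        intro m
        rw [Real.volume_Icc, Real.volume_Icc]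
        ring_nf
      calc (∑' m, volume (Icc (-(bL m)) (-(aL m))))
          = ∑' m, volume (Icc (aL m) (bL m)) := tsum_congr heq
        _ < ⊤ := hvL
    · rw [Real.volume_Icc]
      exact ENNReal.ofReal_lt_top
  · -- uniqueness
    intro t hnt
    have hmid : t ∉ Icc (-S₀) T₀ := by
      intro hmem
      refine hnt (mem_iUnion.2 ⟨2, ?_⟩)
      show t ∈ Icc (if 2 % 3 = 0 then aR (2/3) else if 2 % 3 = 1 then -(bL (2/3))
          else if 2 = 2 then -S₀ else 1)
        (if 2 % 3 = 0 then bR (2/3) else if 2 % 3 = 1 then -(aL (2/3))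
          else if 2 = 2 then T₀ else 0)
      norm_num
      exact hmem
    have hcases : t < -S₀ ∨ T₀ < t := by
      by_contra hc
      push_neg at hc
      exact hmid ⟨hc.1, hc.2⟩
    rcases hcases with hL | hR
    · -- left regime
      have hnL : -t ∉ ⋃ m, Icc (aL m) (bL m) := by
        intro hmem
        obtain ⟨m, hm⟩ := mem_iUnion.1 hmem
        refine hnt (mem_iUnion.2 ⟨3*m+1, ?_⟩)
        have e1 : ¬((3*m+1) % 3 = 0) := by omega
        have e2 : (3*m+1) % 3 = 1 := by omega
        have e3 : (3*m+1)/3 = m := by omega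
        show t ∈ Icc (if (3*m+1) % 3 = 0 then aR ((3*m+1)/3) else if (3*m+1) % 3 = 1
            then -(bL ((3*m+1)/3)) else if (3*m+1) = 2 then -S₀ else 1)
          (if (3*m+1) % 3 = 0 then bR ((3*m+1)/3) else if (3*m+1) % 3 = 1
            then -(aL ((3*m+1)/3)) else if (3*m+1) = 2 then T₀ else 0)
        simp only [if_neg e1, if_pos e2, e3]
        obtain ⟨hma, hmb⟩ := hm
        constructor <;> linarith
      have hex := huL (-t) (by linarith) hnL
      have hconv : ∃! u : ℝ, f i (app (B₂ ++ A₂) t u) + t = u := by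
        obtain ⟨v, hv, hvu⟩ := hex
        simp only [neg_neg] at hv
        refine ⟨-v, ?_, ?_⟩
        · show f i (app (B₂ ++ A₂) t (-v)) + t = -v
          linarith
        · intro u hu
          have hmu : -(f i (-(-(app (B₂ ++ A₂) (-(-t)) (-(-u)))))) + -t = -u := by
            simp only [neg_neg]
            linarith
          have := hvu (-u) hmu
          linarith
      have htr := transfer A₂ B₂ (f i) t hconv
      rw [← hAB₂] at htr
      obtain ⟨x, hx, hxu⟩ := htr
      exact ⟨x, (hfold t x).trans hx, fun y hy => hxu y ((hfold t y).symm.trans hy)⟩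
    · -- right regime
      have hnR : t ∉ ⋃ m, Icc (aR m) (bR m) := by
        intro hmem
        obtain ⟨m, hm⟩ := mem_iUnion.1 hmem
        refine hnt (mem_iUnion.2 ⟨3*m, ?_⟩)
        have e1 : (3*m) % 3 = 0 := by omega
        have e3 : (3*m)/3 = m := by omega
        show t ∈ Icc (if (3*m) % 3 = 0 then aR ((3*m)/3) else if (3*m) % 3 = 1
            then -(bL ((3*m)/3)) else if (3*m) = 2 then -S₀ else 1)
          (if (3*m) % 3 = 0 then bR ((3*m)/3) else if (3*m) % 3 = 1
            then -(aL ((3*m)/3)) else if (3*m) = 2 then T₀ else 0)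
        simp only [if_pos e1, e3]
        exact hm
      have hconv : ∃! u : ℝ, f j (app (B₁ ++ A₁) t u) + t = u := huR t hR hnR
      have htr := transfer A₁ B₁ (f j) t hconv
      rw [← hAB₁] at htr
      obtain ⟨x, hx, hxu⟩ := htr
      exact ⟨x, (hfold t x).trans hx, fun y hy => hxu y ((hfold t y).symm.trans hy)⟩
end

section
/- Let f be an increasing homeomorphism from ℝ onto an interval (a,b) with a > −∞ and b < +∞. For t ∈ ℝ let F_t(x) = f(x)+t. Then there exists a subset N ⊂ ℝ of finite Lebesgue measure such that for all t ∉ N, the map F_t has a unique fixed point in ℝ. -/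
open Set Function Filter MeasureTheory

private lemma lip_vol_image {φ : ℝ → ℝ} {s : Set ℝ} (hφ : LipschitzOnWith 1 φ s) :
    volume (φ '' s) ≤ volume s := by
  have h := hφ.hausdorffMeasure_image_le (d := 1) zero_le_one
  rw [MeasureTheory.hausdorffMeasure_real] at h
  simpa using h

/-- The set of values `t` having a solution of `x - f x = t` strictly to the left of the
maximal solution at which `x - f x` exceeds `t`. -/
def badA (f : ℝ → ℝ) : Set ℝ :=
  {t | ∃ z, z < sSup {x | x - f x = t} ∧ t < z - f z}

lemma badA_vol (f : ℝ → ℝ) (hmono : StrictMono f) (hcont : Continuous f)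
    (a b : ℝ) (hrange : Set.range f = Set.Ioo a b) :
    volume (badA f) ≤ ENNReal.ofReal (2 * (b - a)) := by
  set h : ℝ → ℝ := fun x => x - f x with hh
  have hfm : ∀ x, a < f x ∧ f x < b := by
    intro x
    have : f x ∈ Ioo a b := hrange ▸ mem_range_self x
    exact ⟨this.1, this.2⟩
  have hab : a < b := (hfm 0).1.trans (hfm 0).2
  have hhc : Continuous h := continuous_id.sub hcont
  have hlip : ∀ x y : ℝ, x ≤ y → h y - h x ≤ y - x := by
    intro x y hxy
    have := (hmono.le_iff_le).2 hxy
    simp only [hh]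
    linarith
  have htop : Tendsto h atTop atTop := by
    apply tendsto_atTop_mono (f := fun x : ℝ => x - b)
    · intro x; have := (hfm x).2; simp only [hh]; linarith
    · exact tendsto_atTop_add_const_right _ (-b) tendsto_id
  have hbot : Tendsto h atBot atBot := by
    apply tendsto_atBot_mono (f := fun x : ℝ => x - a)
    · intro x; have := (hfm x).1; simp only [hh]; linarith
    · exact tendsto_atBot_add_const_right _ (-a) tendsto_id
  have hsurj : ∀ t : ℝ, ∃ x, h x = t := fun t => (hhc.surjective htop hbot) t
  set S : ℝ → Set ℝ := fun t => {x | h x = t} with hS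
  have hbddA : ∀ t, BddAbove (S t) := by
    intro t
    refine ⟨t + b, fun x hx => ?_⟩
    have hx' : x - f x = t := hx
    have := (hfm x).2
    linarith
  have hbddB : ∀ t, BddBelow (S t) := by
    intro t
    refine ⟨t + a, fun x hx => ?_⟩
    have hx' : x - f x = t := hx
    have := (hfm x).1
    linarith
  have hclosed : ∀ t, IsClosed (S t) := fun t => isClosed_eq hhc continuous_const
  set u : ℝ → ℝ := fun t => sSup (S t) with hud
  have hu : ∀ t, h (u t) = t := by
    intro t
    obtain ⟨x, hx⟩ := hsurj t
    exact (hclosed t).csSup_mem ⟨x, (hx : x ∈ S t)⟩ (hbddA t)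
  have hray : ∀ t z, u t < z → t < h z := by
    intro t z hz
    by_contra hcon
    push_neg at hcon
    rcases eq_or_lt_of_le hcon with heq | hlt
    · exact absurd (le_csSup (hbddA t) (heq : h z = t)) (not_le.2 hz)
    · obtain ⟨M, hM1, hM2⟩ := ((htop.eventually_ge_atTop t).and (eventually_ge_atTop z)).exists
      obtain ⟨w, hw1, hw2⟩ := intermediate_value_Icc hM2 (hhc.continuousOn (s := Icc z M))
        (by exact ⟨hlt.le, hM1⟩ : t ∈ Icc (h z) (h M))
      have : w ≤ u t := le_csSup (hbddA t) (hw2 : h w = t)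
      exact absurd (hz.trans_le hw1.1) (not_lt.2 this)
  have humono : ∀ s t : ℝ, s < t → u s < u t := by
    intro s t hst
    by_contra hcon
    push_neg at hcon
    rcases eq_or_lt_of_le hcon with heq | hlt
    · have h1 := hu s
      have h2 := hu t
      rw [heq, h1] at h2
      linarith
    · have := hray t (u s) hlt
      rw [hu s] at this
      linarith
  have hexp : ∀ s t : ℝ, s < t → t - s ≤ u t - u s := by
    intro s t hst
    have hlt := humono s t hst
    have h2 := hlip (u s) (u t) hlt.le
    rw [hu s, hu t] at h2
    linarith
  have hueq : ∀ t, sSup {x | x - f x = t} = u t := by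
    intro t; simp only [hud, hS, hh]
  have hbadA_mem : ∀ t, t ∈ badA f ↔ ∃ z, z < u t ∧ t < h z := by
    intro t
    constructor
    · rintro ⟨z, h1, h2⟩
      exact ⟨z, by rw [← hueq]; exact h1, by simp only [hh]; exact h2⟩
    · rintro ⟨z, h1, h2⟩
      exact ⟨z, by rw [hueq]; exact h1, by simp only [hh] at h2; exact h2⟩
  have hBsub : badA f ⊆ h '' (u '' badA f) := by
    intro t ht
    exact ⟨u t, mem_image_of_mem u ht, hu t⟩
  have hlipOn : LipschitzOnWith 1 h (u '' badA f) := by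
    apply LipschitzOnWith.of_dist_le_mul
    intro x hx y hy
    obtain ⟨s, _, rfl⟩ := hx
    obtain ⟨t, _, rfl⟩ := hy
    rw [hu s, hu t, NNReal.coe_one, one_mul]
    have key : ∀ p q : ℝ, p < q → dist p q ≤ dist (u p) (u q) := by
      intro p q hpq
      have h1 := hexp p q hpq
      have h2 := humono p q hpq
      rw [Real.dist_eq, Real.dist_eq, abs_of_nonpos (by linarith), abs_of_nonpos (by linarith)]
      linarith
    rcases lt_trichotomy s t with hc | hc | hc
    · exact key s t hc
    · simp [hc]
    · rw [dist_comm, dist_comm (u s)]; exact key t s hc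
  set W : Set ℝ := ⋃ x' : ℝ, (Ioi x' ∩ h ⁻¹' (Iio (h x'))) with hW
  have hWmem : ∀ x, x ∈ W ↔ ∃ x', x' < x ∧ h x < h x' := by
    intro x
    simp only [hW, mem_iUnion, mem_inter_iff, mem_Ioi, mem_preimage, mem_Iio]
  have huW : u '' badA f ⊆ W := by
    rintro _ ⟨t, ht, rfl⟩
    obtain ⟨z, hz1, hz2⟩ := (hbadA_mem t).1 ht
    rw [hWmem]
    exact ⟨z, hz1, by rw [hu t]; exact hz2⟩
  have window : ∀ c d : ℝ, c < d →
      volume (W ∩ Ioo c d) ≤ ENNReal.ofReal ((f d - f c) + (b - a)) := by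
    intro c d hcd
    set g : ℝ → ℝ := fun x => sSup (h '' Icc c x) with hg
    have hne : ∀ x, c ≤ x → (h '' Icc c x).Nonempty :=
      fun x hx => ⟨h c, mem_image_of_mem h (left_mem_Icc.2 hx)⟩
    have hbdd : ∀ x : ℝ, BddAbove (h '' Icc c x) :=
      fun x => IsCompact.bddAbove_image isCompact_Icc hhc.continuousOn
    have hhg : ∀ x, c ≤ x → h x ≤ g x :=
      fun x hx => le_csSup (hbdd x) (mem_image_of_mem h (right_mem_Icc.2 hx))
    have hgc : g c = h c := by rw [hg]; simp [Icc_self]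
    have hgmono : ∀ x y : ℝ, c ≤ x → x ≤ y → g x ≤ g y := by
      intro x y h1 h2
      exact csSup_le_csSup (hbdd y) (hne x h1) (image_mono (Icc_subset_Icc_right h2))
    have hglip : ∀ x y : ℝ, c ≤ x → x ≤ y → g y ≤ g x + (y - x) := by
      intro x y h1 h2
      apply csSup_le (hne y (h1.trans h2))
      rintro w ⟨z, hz, rfl⟩
      rcases le_or_gt z x with hzx | hzx
      · have : h z ≤ g x := le_csSup (hbdd x) (mem_image_of_mem h ⟨hz.1, hzx⟩)
        linarith
      · have h3 := hlip x z hzx.le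
        have h4 : h x ≤ g x := hhg x h1
        have h5 := hz.2
        linarith
    have hglipOn : LipschitzOnWith 1 g (Icc c d) := by
      apply LipschitzOnWith.of_dist_le_mul
      intro x hx y hy
      rw [NNReal.coe_one, one_mul]
      have key : ∀ p q : ℝ, p ∈ Icc c d → p ≤ q → dist (g p) (g q) ≤ dist p q := by
        intro p q hp hpq
        have h1 := hgmono p q hp.1 hpq
        have h2 := hglip p q hp.1 hpq
        rw [Real.dist_eq, Real.dist_eq, abs_of_nonpos (by linarith), abs_of_nonpos (by linarith)]
        linarith
      rcases le_total x y with hc' | hc'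
      · exact key x y hx hc'
      · rw [dist_comm, dist_comm x]; exact key y x hy hc'
    have hgcont : ContinuousOn g (Icc c d) := hglipOn.continuousOn
    set G : Set ℝ := {x | x ∈ Icc c d ∧ g x ≤ h x} with hG
    have hGclosed : IsClosed G := by
      have heq : G = Icc c d ∩ (fun x => g x - h x) ⁻¹' (Iic 0) := by
        ext x
        simp only [hG, mem_setOf_eq, mem_inter_iff, mem_preimage, mem_Iic, sub_nonpos]
      rw [heq]
      exact ContinuousOn.preimage_isClosed_of_isClosed
        (hgcont.sub hhc.continuousOn) isClosed_Icc isClosed_Iic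
    set Wc : Set ℝ := {x | x ∈ Ioo c d ∧ ∃ x', c ≤ x' ∧ x' < x ∧ h x < h x'} with hWc
    have hWcsub : Wc ⊆ Icc c d \ G := by
      rintro x ⟨hxI, x', hx1, hx2, hx3⟩
      refine ⟨⟨hxI.1.le, hxI.2.le⟩, ?_⟩
      intro hxG
      have h5 : h x' ≤ g x := le_csSup (hbdd x) (mem_image_of_mem h ⟨hx1, hx2.le⟩)
      have h6 := hxG.2
      linarith
    have hGsub : G ⊆ Icc c d := fun x hx => hx.1
    have hGvol_lt : volume G ≠ ⊤ :=
      (lt_of_le_of_lt (measure_mono hGsub)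
        (by rw [Real.volume_Icc]; exact ENNReal.ofReal_lt_top)).ne
    have hcore : volume Wc ≤ ENNReal.ofReal (f d - f c) := by
      rcases le_or_gt (h d) (h c) with hdc | hdc
      · have h1 : volume Wc ≤ volume (Ioo c d) := measure_mono (fun x hx => hx.1)
        rw [Real.volume_Ioo] at h1
        refine h1.trans (ENNReal.ofReal_le_ofReal ?_)
        simp only [hh] at hdc
        linarith
      · have hconst : ∀ x, x ∈ Icc c d \ G → x ≠ d →
            ∃ q : ℚ, (q:ℝ) ∈ Icc c d ∧ g (q:ℝ) = g x := by
          rintro x ⟨hxIcc, hxG⟩ hxd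
          have hhx : h x < g x := by
            rcases lt_or_ge (h x) (g x) with h1 | h1
            · exact h1
            · exact absurd ⟨hxIcc, (hhg x hxIcc.1).antisymm h1 ▸ le_rfl⟩ hxG
          have hxc : c < x := by
            rcases eq_or_lt_of_le hxIcc.1 with heq | h1
            · rw [← heq, hgc] at hhx; linarith
            · exact h1
          have hxd' : x < d := lt_of_le_of_ne hxIcc.2 hxd
          have hnb : {y : ℝ | h y < g x} ∩ Ioo c d ∈ nhds x :=
            Filter.inter_mem ((isOpen_lt hhc continuous_const).mem_nhds hhx)
              ((isOpen_Ioo).mem_nhds ⟨hxc, hxd'⟩)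
          obtain ⟨δ, hδ, hball⟩ := Metric.mem_nhds_iff.1 hnb
          obtain ⟨q, hq1, hq2⟩ := exists_rat_btwn (sub_lt_self x hδ)
          have hqball : (q:ℝ) ∈ Metric.ball x δ := by
            rw [Metric.mem_ball, Real.dist_eq, abs_of_nonpos (by linarith)]
            linarith
          have hqIoo : (q:ℝ) ∈ Ioo c d := (hball hqball).2
          refine ⟨q, ⟨hqIoo.1.le, hqIoo.2.le⟩, ?_⟩
          have hle : g (q:ℝ) ≤ g x := hgmono _ _ hqIoo.1.le hq2.le
          rcases eq_or_lt_of_le hle with heq | hgq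
          · exact heq
          · exfalso
            have hall : ∀ z, z ∈ Icc c x → h z < g x := by
              intro z hz
              rcases le_or_gt z (q:ℝ) with h1 | h1
              · have : h z ≤ g (q:ℝ) := le_csSup (hbdd _) (mem_image_of_mem h ⟨hz.1, h1⟩)
                linarith
              · have hzb : z ∈ Metric.ball x δ := by
                  rw [Metric.mem_ball, Real.dist_eq, abs_of_nonpos (by linarith [hz.2])]
                  linarith [hz.2]
                exact (hball hzb).1
            obtain ⟨z0, hz0m, hz0max⟩ :=
              isCompact_Icc.exists_isMaxOn ⟨x, right_mem_Icc.2 hxc.le⟩ hhc.continuousOn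
            have hgle : g x ≤ h z0 := by
              apply csSup_le (hne x hxc.le)
              rintro w ⟨z, hz, rfl⟩
              exact hz0max hz
            exact absurd hgle (not_le.2 ((hall z0 hz0m)))
        have hcount : (g '' (Icc c d \ G)).Countable := by
          have hsub : g '' (Icc c d \ G) ⊆
              insert (g d) (g '' (Set.range (fun q : ℚ => (q:ℝ)) ∩ Icc c d)) := by
            rintro _ ⟨x, hx, rfl⟩
            by_cases hxd : x = d
            · rw [hxd]; exact mem_insert _ _
            · obtain ⟨q, hq1, hq2⟩ := hconst x hx hxd
              exact mem_insert_of_mem _ ⟨(q:ℝ), ⟨⟨q, rfl⟩, hq1⟩, hq2⟩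
          exact Set.Countable.mono hsub
            (((Set.Countable.mono inter_subset_left (countable_range _)).image g).insert _)
        have hzero : volume (g '' (Icc c d \ G)) = 0 := hcount.measure_zero _
        have hcover : Icc (h c) (h d) ⊆ g '' G ∪ g '' (Icc c d \ G) := by
          intro t ht
          have h1 : g c ≤ t := by rw [hgc]; exact ht.1
          have h2 : t ≤ g d := ht.2.trans (hhg d hcd.le)
          have ht' : t ∈ Icc (g c) (g d) := ⟨h1, h2⟩
          obtain ⟨x, hx1, hx2⟩ := intermediate_value_Icc hcd.le hgcont ht'
          by_cases hxG : x ∈ G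
          · exact Or.inl ⟨x, hxG, hx2⟩
          · exact Or.inr ⟨x, ⟨hx1, hxG⟩, hx2⟩
        have hlow : ENNReal.ofReal (h d - h c) ≤ volume G := by
          calc ENNReal.ofReal (h d - h c) = volume (Icc (h c) (h d)) := by
                rw [Real.volume_Icc]
          _ ≤ volume (g '' G ∪ g '' (Icc c d \ G)) := measure_mono hcover
          _ ≤ volume (g '' G) + volume (g '' (Icc c d \ G)) := measure_union_le _ _
          _ = volume (g '' G) := by rw [hzero, add_zero]
          _ ≤ volume G := lip_vol_image (hglipOn.mono hGsub)
        have hdiff : volume (Icc c d \ G) = volume (Icc c d) - volume G :=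
          measure_diff hGsub hGclosed.measurableSet.nullMeasurableSet hGvol_lt
        calc volume Wc ≤ volume (Icc c d \ G) := measure_mono hWcsub
        _ = volume (Icc c d) - volume G := hdiff
        _ ≤ ENNReal.ofReal (d - c) - ENNReal.ofReal (h d - h c) := by
            rw [Real.volume_Icc]; exact tsub_le_tsub le_rfl hlow
        _ = ENNReal.ofReal ((d - c) - (h d - h c)) :=
            (ENNReal.ofReal_sub (d - c) (by linarith)).symm
        _ = ENNReal.ofReal (f d - f c) := by
            congr 1; simp only [hh]; ring
    have hsplit : W ∩ Ioo c d ⊆ Wc ∪ Ioo c (c + (b - a)) := by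
      rintro x ⟨hxW, hxI⟩
      rw [hWmem] at hxW
      obtain ⟨x', hx1, hx2⟩ := hxW
      rcases le_or_gt c x' with h1 | h1
      · exact Or.inl ⟨hxI, x', h1, hx1, hx2⟩
      · right
        have e1 : h x' < c - a := by
          have := (hfm x').1; simp only [hh]; linarith
        have e2 : x - b < h x := by
          have := (hfm x).2; simp only [hh]; linarith
        exact ⟨hxI.1, by linarith⟩
    calc volume (W ∩ Ioo c d) ≤ volume (Wc ∪ Ioo c (c + (b - a))) := measure_mono hsplit
    _ ≤ volume Wc + volume (Ioo c (c + (b - a))) := measure_union_le _ _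
    _ ≤ ENNReal.ofReal (f d - f c) + ENNReal.ofReal (b - a) := by
        refine add_le_add hcore ?_
        rw [Real.volume_Ioo]
        exact ENNReal.ofReal_le_ofReal (le_of_eq (by ring))
    _ = ENNReal.ofReal ((f d - f c) + (b - a)) := by
        rw [← ENNReal.ofReal_add (by linarith [hmono.le_iff_le.2 hcd.le]) (by linarith)]
  have hWvol : volume W ≤ ENNReal.ofReal (2 * (b - a)) := by
    have hUnion : W = ⋃ n : ℕ, (W ∩ Ioo (-(n:ℝ)) (n:ℝ)) := by
      ext x
      simp only [mem_iUnion, mem_inter_iff]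
      constructor
      · intro hx
        obtain ⟨n, hn⟩ := exists_nat_gt |x|
        have := abs_lt.1 hn
        exact ⟨n, hx, ⟨by linarith [this.1], this.2⟩⟩
      · rintro ⟨n, hn, _⟩; exact hn
    have hmonoseq : Monotone (fun n : ℕ => W ∩ Ioo (-(n:ℝ)) (n:ℝ)) := by
      intro m n hmn
      refine inter_subset_inter le_rfl (Ioo_subset_Ioo ?_ ?_)
      · exact neg_le_neg (Nat.cast_le.2 hmn)
      · exact Nat.cast_le.2 hmn
    rw [hUnion, hmonoseq.measure_iUnion]
    apply iSup_le
    intro n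
    rcases lt_or_ge (-(n:ℝ)) (n:ℝ) with hn | hn
    · refine (window _ _ hn).trans (ENNReal.ofReal_le_ofReal ?_)
      have h1 : f (n:ℝ) < b := (hfm _).2
      have h2 : a < f (-(n:ℝ)) := (hfm _).1
      linarith
    · rw [Ioo_eq_empty (not_lt.2 hn), inter_empty, measure_empty]
      exact zero_le
  calc volume (badA f) ≤ volume (h '' (u '' badA f)) := measure_mono hBsub
  _ ≤ volume (u '' badA f) := lip_vol_image hlipOn
  _ ≤ volume W := measure_mono huW
  _ ≤ _ := hWvol

/-- case `n = 1` of the EHN lemma. For an increasing homeomorphism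
`f : ℝ → (a,b)` onto a bounded interval, outside a set of finite Lebesgue measure,
the map `x ↦ f(x) + t` has a unique fixed point. -/
theorem EHN_unique_fixed_point_one (f : ℝ → ℝ)
    (hmono : StrictMono f) (hcont : Continuous f)
    (a b : ℝ) (hrange : Set.range f = Set.Ioo a b) :
    ∃ N : Set ℝ, MeasureTheory.volume N < ⊤ ∧
      ∀ t : ℝ, t ∉ N → ∃! x : ℝ, f x + t = x := by
  classical
  set h : ℝ → ℝ := fun x => x - f x with hh
  have hfm : ∀ x, a < f x ∧ f x < b := by
    intro x
    have : f x ∈ Ioo a b := hrange ▸ mem_range_self x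
    exact ⟨this.1, this.2⟩
  have hhc : Continuous h := continuous_id.sub hcont
  have htop : Tendsto h atTop atTop := by
    apply tendsto_atTop_mono (f := fun x : ℝ => x - b)
    · intro x; have := (hfm x).2; simp only [hh]; linarith
    · exact tendsto_atTop_add_const_right _ (-b) tendsto_id
  have hbot : Tendsto h atBot atBot := by
    apply tendsto_atBot_mono (f := fun x : ℝ => x - a)
    · intro x; have := (hfm x).1; simp only [hh]; linarith
    · exact tendsto_atBot_add_const_right _ (-a) tendsto_id
  have hsurj : ∀ t : ℝ, ∃ x, h x = t := fun t => (hhc.surjective htop hbot) t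
  set f2 : ℝ → ℝ := fun x => -f (-x) with hf2
  have hmono2 : StrictMono f2 := fun x y hxy => by
    simp only [hf2]
    exact neg_lt_neg (hmono (neg_lt_neg hxy))
  have hcont2 : Continuous f2 := (hcont.comp continuous_neg).neg
  have hrange2 : Set.range f2 = Set.Ioo (-b) (-a) := by
    ext y
    simp only [hf2, mem_range, mem_Ioo]
    constructor
    · rintro ⟨x, rfl⟩
      have := hfm (-x)
      constructor <;> [linarith [this.2]; linarith [this.1]]
    · intro hy
      have : -y ∈ Set.range f := by
        rw [hrange]; exact ⟨by linarith [hy.2], by linarith [hy.1]⟩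
      obtain ⟨x, hx⟩ := this
      exact ⟨-x, by rw [neg_neg, hx, neg_neg]⟩
  set C : Set ℝ := Set.range (fun q : ℚ => (q:ℝ) - f q) with hC
  refine ⟨(badA f ∪ (-(badA f2))) ∪ C, ?_, ?_⟩
  · have v1 := badA_vol f hmono hcont a b hrange
    have v2 := badA_vol f2 hmono2 hcont2 (-b) (-a) hrange2
    have v2' : volume (-(badA f2)) ≤ ENNReal.ofReal (2 * (-a - -b)) := by
      rw [Measure.measure_neg]; exact v2
    have vC : volume C = 0 := (countable_range _).measure_zero _
    calc volume ((badA f ∪ (-(badA f2))) ∪ C)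
        ≤ volume (badA f ∪ (-(badA f2))) + volume C := measure_union_le _ _
      _ ≤ volume (badA f) + volume (-(badA f2)) + 0 := by
          rw [vC]; exact add_le_add (measure_union_le _ _) le_rfl
      _ < ⊤ := by
          rw [add_zero]
          exact ENNReal.add_lt_top.2
            ⟨lt_of_le_of_lt v1 ENNReal.ofReal_lt_top,
             lt_of_le_of_lt v2' ENNReal.ofReal_lt_top⟩
  · intro t htN
    obtain ⟨x0, hx0⟩ := hsurj t
    refine ⟨x0, by simp only [hh] at hx0; linarith, ?_⟩
    intro y hy
    have hy' : h y = t := by simp only [hh]; linarith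
    by_contra hne
    apply htN
    set S : Set ℝ := {x | h x = t} with hSdef
    have hSne : S.Nonempty := ⟨x0, hx0⟩
    have hbddA : BddAbove S := by
      refine ⟨t + b, fun x hx => ?_⟩
      have hx' : x - f x = t := hx
      have := (hfm x).2
      linarith
    have hbddB : BddBelow S := by
      refine ⟨t + a, fun x hx => ?_⟩
      have hx' : x - f x = t := hx
      have := (hfm x).1
      linarith
    have hclosed : IsClosed S := isClosed_eq hhc continuous_const
    set u := sSup S with hu_def
    set l := sInf S with hl_def
    have hum : h u = t := hclosed.csSup_mem hSne hbddA
    have hlm : h l = t := hclosed.csInf_mem hSne hbddB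
    have hlu : l < u := by
      have h1 : l ≤ y := csInf_le hbddB hy'
      have h2 : y ≤ u := le_csSup hbddA hy'
      have h3 : l ≤ x0 := csInf_le hbddB hx0
      have h4 : x0 ≤ u := le_csSup hbddA hx0
      rcases lt_or_gt_of_ne hne with hc | hc <;> linarith
    by_cases hA : ∃ z, z < u ∧ t < h z
    · refine Or.inl (Or.inl ?_)
      obtain ⟨z, hz1, hz2⟩ := hA
      refine ⟨z, ?_, ?_⟩
      · have heq : sSup {x : ℝ | x - f x = t} = u := by
          simp only [hu_def, hSdef, hh]
        rw [heq]; exact hz1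
      · simp only [hh] at hz2; exact hz2
    · by_cases hB : ∃ z, l < z ∧ h z < t
      · refine Or.inl (Or.inr ?_)
        rw [Set.mem_neg]
        obtain ⟨z, hz1, hz2⟩ := hB
        have hSeq : {x : ℝ | x - f2 x = -t} = -S := by
          ext w
          simp only [hf2, Set.mem_neg, hSdef, mem_setOf_eq, hh]
          constructor <;> intro hw <;> linarith
        have hSup2 : sSup {x : ℝ | x - f2 x = -t} = -l := by
          rw [hSeq, hl_def, Real.sInf_def, neg_neg]
        refine ⟨-z, ?_, ?_⟩
        · rw [hSup2]; exact neg_lt_neg hz1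
        · simp only [hf2, neg_neg]
          simp only [hh] at hz2
          linarith
      · refine Or.inr ?_
        push_neg at hA hB
        obtain ⟨q, hq1, hq2⟩ := exists_rat_btwn hlu
        have e1 : h q ≤ t := hA q hq2
        have e2 : t ≤ h q := hB q hq1
        have heq : (q:ℝ) - f q = t := by
          simp only [hh] at e1 e2
          linarith
        rw [hC]
        exact ⟨q, heq⟩
end

section
/- With the setup of the finite-fixed-point lemma (f_i increasing homeomorphisms onto intervals, with f_n having bounded-above image b_n < ∞, and some a_j > −∞), define G(t,x) = F_t(x) − t where F_t = τ_t∘f_n∘⋯∘τ_t∘f_1. Then the range of G on ℝ_{≥0} × ℝ is a bounded interval, and for every x ≥ b_0 := sup range(G) there is a unique t = T(x) > 0 with F_{T(x)}(x) = x. Moreover the function T satisfies: (T1) for every x ≥ b_0, a_0 < x − T(x) < b_0 where (a_0,b_0) is the range of G; and (T2) for all b_0 ≤ x_1 < x_2, f_1(x_1) − f_1(x_2) < T(x_2) − T(x_1) < x_2 − x_1. -/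
open Set Function Filter MeasureTheory

def FF (n : ℕ) (f : Fin n → ℝ → ℝ) (t x : ℝ) : ℝ :=
  (List.ofFn fun i : Fin n => fun z : ℝ => f i z + t).foldl (fun z g => g z) x

lemma FF_zero (f : Fin 0 → ℝ → ℝ) (t x : ℝ) : FF 0 f t x = x := by
  simp [FF]

lemma FF_succ (n : ℕ) (f : Fin (n+1) → ℝ → ℝ) (t x : ℝ) :
    FF (n+1) f t x = FF n (fun i => f i.succ) t (f 0 x + t) := by
  simp [FF, List.ofFn_succ]

lemma FF_last (n : ℕ) (f : Fin (n+1) → ℝ → ℝ) (t x : ℝ) :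
    FF (n+1) f t x = f (Fin.last n) (FF n (fun i => f i.castSucc) t x) + t := by
  induction n generalizing x with
  | zero => rw [FF_succ, FF_zero, FF_zero]; rfl
  | succ m ih =>
    rw [FF_succ (m+1) f t x, ih (fun i => f i.succ), FF_succ m (fun i => f i.castSucc) t x]
    rw [Fin.succ_last]
    congr 2

lemma FF_strictMono (n : ℕ) (f : Fin n → ℝ → ℝ) (hf : ∀ i, StrictMono (f i)) (t : ℝ) :
    StrictMono (fun x => FF n f t x) := by
  induction n with
  | zero => simp only [FF_zero]; exact strictMono_id
  | succ m ih =>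
    intro x y hxy
    simp only [FF_succ]
    exact ih (fun i => f i.succ) (fun i => hf i.succ) (by
      linarith [hf 0 hxy])

lemma FF_mono (n : ℕ) (f : Fin n → ℝ → ℝ) (hf : ∀ i, StrictMono (f i))
    {t t' x x' : ℝ} (ht : t ≤ t') (hx : x ≤ x') : FF n f t x ≤ FF n f t' x' := by
  induction n generalizing x x' with
  | zero => simpa [FF_zero] using hx
  | succ m ih =>
    rw [FF_succ, FF_succ]
    exact ih (fun i => f i.succ) (fun i => hf i.succ)
      (add_le_add ((hf 0).monotone hx) ht)

lemma FF_cont (n : ℕ) (f : Fin n → ℝ → ℝ) (hf : ∀ i, Continuous (f i)) :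
    Continuous (fun p : ℝ × ℝ => FF n f p.1 p.2) := by
  induction n with
  | zero => simpa [FF_zero] using continuous_snd
  | succ m ih =>
    simp only [FF_succ]
    exact (ih (fun i => f i.succ) (fun i => hf i.succ)).comp
      (continuous_fst.prodMk (((hf 0).comp continuous_snd).add continuous_fst))

lemma FF_add (n : ℕ) (f : Fin (n+1) → ℝ → ℝ) (hf : ∀ i, StrictMono (f i))
    {t t' : ℝ} (x : ℝ) (ht : t ≤ t') : FF (n+1) f t x + (t' - t) ≤ FF (n+1) f t' x := by
  induction n generalizing x with
  | zero =>
    rw [FF_succ, FF_succ, FF_zero, FF_zero]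
    linarith
  | succ m ih =>
    rw [FF_succ (m+1) f t x, FF_succ (m+1) f t' x]
    calc FF (m+1) (fun i => f i.succ) t (f 0 x + t) + (t' - t)
        ≤ FF (m+1) (fun i => f i.succ) t' (f 0 x + t) :=
          ih (fun i => f i.succ) (fun i => hf i.succ) _
      _ ≤ FF (m+1) (fun i => f i.succ) t' (f 0 x + t') :=
          FF_mono _ _ (fun i => hf i.succ) le_rfl (by linarith)

lemma FF_upper (n : ℕ) (f : Fin (n+1) → ℝ → ℝ) (hf : ∀ i, StrictMono (f i))
    (hb : BddAbove (Set.range (f (Fin.last n))) ) (t x : ℝ) :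
    FF (n+1) f t x - t < sSup (Set.range (f (Fin.last n))) := by
  induction n generalizing t x with
  | zero =>
    rw [FF_succ, FF_zero]
    have h0 : (Fin.last 0) = (0 : Fin 1) := rfl
    rw [h0] at hb ⊢
    have : f 0 x < f 0 (x+1) := hf 0 (by linarith)
    have h2 : f 0 (x+1) ≤ sSup (Set.range (f 0)) := le_csSup hb ⟨x+1, rfl⟩
    linarith
  | succ m ih =>
    rw [FF_succ (m+1) f t x]
    have hlast : (fun i : Fin (m+1) => f i.succ) (Fin.last m) = f (Fin.last (m+1)) := by
      show f (Fin.last m).succ = f (Fin.last (m+1)); rw [Fin.succ_last]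
    have := ih (fun i => f i.succ) (fun i => hf i.succ) (by rw [Fin.succ_last]; exact hb) t (f 0 x + t)
    rwa [Fin.succ_last] at this

lemma FF_lower (n : ℕ) (f : Fin n → ℝ → ℝ) (hf : ∀ i, StrictMono (f i))
    (i : Fin n) (hb : BddBelow (Set.range (f i))) :
    ∃ c : ℝ, ∀ t : ℝ, 0 ≤ t → ∀ x : ℝ, c ≤ FF n f t x - t := by
  induction n with
  | zero => exact absurd i.2 (by omega)
  | succ m ih =>
    induction i using Fin.cases with
    | zero =>
      set A := sInf (Set.range (f 0)) with hA
      have hAle : ∀ w, A ≤ f 0 w := fun w => csInf_le hb ⟨w, rfl⟩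
      cases m with
      | zero =>
        refine ⟨A, fun t ht x => ?_⟩
        rw [FF_succ, FF_zero]
        have := hAle x; linarith
      | succ k =>
        refine ⟨FF (k+1) (fun i => f i.succ) 0 A, fun t ht x => ?_⟩
        rw [FF_succ (k+1) f t x]
        have h1 : FF (k+1) (fun i => f i.succ) 0 (f 0 x + t) + (t - 0)
            ≤ FF (k+1) (fun i => f i.succ) t (f 0 x + t) :=
          FF_add _ _ (fun i => hf i.succ) _ ht
        have h2 : FF (k+1) (fun i => f i.succ) 0 A
            ≤ FF (k+1) (fun i => f i.succ) 0 (f 0 x + t) :=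
          FF_mono _ _ (fun i => hf i.succ) le_rfl (by have := hAle x; linarith)
        linarith
    | succ j =>
      obtain ⟨c, hc⟩ := ih (fun i => f i.succ) (fun i => hf i.succ) j hb
      refine ⟨c, fun t ht x => ?_⟩
      rw [FF_succ]
      exact hc t ht _

lemma FF_reach (n : ℕ) (f : Fin n → ℝ → ℝ) (hf : ∀ i, StrictMono (f i)) (w : ℝ) :
    ∃ t x : ℝ, 0 ≤ t ∧ w ≤ FF n f t x := by
  cases n with
  | zero => exact ⟨0, w, le_rfl, by rw [FF_zero]⟩
  | succ m =>
    set c := FF (m+1) f 0 0 with hc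
    refine ⟨max (w - c) 0, 0, le_max_right _ _, ?_⟩
    have h1 : FF (m+1) f 0 0 + (max (w - c) 0 - 0) ≤ FF (m+1) f (max (w - c) 0) 0 :=
      FF_add _ _ hf _ (le_max_right _ _)
    have h2 : w - c ≤ max (w - c) 0 := le_max_left _ _
    linarith

/-- Sublemma on `T`, within the EHN lemma. `G(t,x) = F_t(x) − t` has
bounded-interval range `(a₀,b₀)` on `ℝ≥0 × ℝ`; for every `x ≥ b₀` there is a unique
`t = T(x) > 0` with `F_{T(x)}(x) = x`; and `T` satisfies (T1) and (T2). -/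
theorem EHN_T_function (n : ℕ) (hn : 0 < n) (f : Fin n → ℝ → ℝ)
    (hmono : ∀ i, StrictMono (f i)) (hcont : ∀ i, Continuous (f i))
    (hlow : ∃ i, BddBelow (Set.range (f i)))
    (hlast : BddAbove (Set.range (f ⟨n - 1, by omega⟩))) :
    ∃ a0 b0 : ℝ, a0 < b0 ∧
      {y : ℝ | ∃ t x : ℝ, 0 ≤ t ∧
          (List.ofFn fun i : Fin n => fun z : ℝ => f i z + t).foldl
            (fun z g => g z) x - t = y}
        = Set.Ioo a0 b0 ∧
      ∃ T : ℝ → ℝ,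
        (∀ x : ℝ, b0 ≤ x →
          0 < T x ∧
          (List.ofFn fun i : Fin n => fun z : ℝ => f i z + T x).foldl
            (fun z g => g z) x = x ∧
          ∀ t : ℝ, 0 < t →
            (List.ofFn fun i : Fin n => fun z : ℝ => f i z + t).foldl
              (fun z g => g z) x = x → t = T x) ∧
        (∀ x : ℝ, b0 ≤ x → a0 < x - T x ∧ x - T x < b0) ∧
        (∀ x1 x2 : ℝ, b0 ≤ x1 → x1 < x2 →
          f ⟨0, hn⟩ x1 - f ⟨0, hn⟩ x2 < T x2 - T x1 ∧ T x2 - T x1 < x2 - x1) := by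
  obtain ⟨m, rfl⟩ : ∃ m, n = m + 1 := ⟨n - 1, by omega⟩
  have hlast' : BddAbove (Set.range (f (Fin.last m))) := hlast
  set B := sSup (Set.range (f (Fin.last m))) with hB
  set S : Set ℝ := {y : ℝ | ∃ t x : ℝ, 0 ≤ t ∧ FF (m+1) f t x - t = y} with hSdef
  obtain ⟨i, hlow_i⟩ := hlow
  obtain ⟨c, hc⟩ := FF_lower (m+1) f hmono i hlow_i
  have hne : S.Nonempty := ⟨FF (m+1) f 0 0 - 0, 0, 0, le_rfl, rfl⟩
  have hSbdd_below : BddBelow S := ⟨c, by rintro y ⟨t, x, ht, rfl⟩; exact hc t ht x⟩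
  have hSlt : ∀ y ∈ S, y < B := by
    rintro y ⟨t, x, ht, rfl⟩; exact FF_upper m f hmono hlast' t x
  have hSbdd_above : BddAbove S := ⟨B, fun y hy => (hSlt y hy).le⟩
  set a0 := sInf S with ha0
  set b0 := sSup S with hb0
  have hb0B : b0 = B := by
    refine le_antisymm (csSup_le hne fun y hy => (hSlt y hy).le) ?_
    refine le_of_forall_lt fun u hu => ?_
    obtain ⟨v, ⟨w, rfl⟩, hv⟩ := exists_lt_of_lt_csSup (⟨f (Fin.last m) 0, ⟨0, rfl⟩⟩ : (Set.range (f (Fin.last m))).Nonempty) hu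
    obtain ⟨t, x, ht, hw⟩ := FF_reach m (fun i => f i.castSucc) (fun i => hmono _) w
    have hmem : f (Fin.last m) (FF m (fun i => f i.castSucc) t x) ∈ S := by
      refine ⟨t, x, ht, ?_⟩
      rw [FF_last]; ring
    calc u < f (Fin.last m) w := hv
      _ ≤ f (Fin.last m) (FF m (fun i => f i.castSucc) t x) := (hmono _).monotone hw
      _ ≤ b0 := le_csSup hSbdd_above hmem
  have hlt_mem : ∀ y ∈ S, a0 < y := by
    rintro y ⟨t, x, ht, rfl⟩
    have hmem : FF (m+1) f t (x-1) - t ∈ S := ⟨t, x-1, ht, rfl⟩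
    have hlt : FF (m+1) f t (x-1) < FF (m+1) f t x :=
      FF_strictMono (m+1) f hmono t (by linarith)
    have := csInf_le hSbdd_below hmem
    simp only [← ha0] at this
    linarith
  have himg : S = (fun p : ℝ × ℝ => FF (m+1) f p.1 p.2 - p.1) ''
      (Set.Ici (0:ℝ) ×ˢ (Set.univ : Set ℝ)) := by
    ext y
    constructor
    · rintro ⟨t, x, ht, rfl⟩; exact ⟨(t, x), ⟨ht, trivial⟩, rfl⟩
    · rintro ⟨⟨t, x⟩, ⟨ht, -⟩, rfl⟩; exact ⟨t, x, ht, rfl⟩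
  have hcont' : Continuous (fun p : ℝ × ℝ => FF (m+1) f p.1 p.2 - p.1) :=
    (FF_cont (m+1) f hcont).sub continuous_fst
  have hconn : IsPreconnected S := by
    rw [himg]
    exact (((convex_Ici (0:ℝ)).prod convex_univ).isPreconnected).image _ hcont'.continuousOn
  have hord : S.OrdConnected := hconn.ordConnected
  have hSIoo : S = Set.Ioo a0 b0 := by
    ext y
    constructor
    · intro hy
      refine ⟨hlt_mem y hy, ?_⟩
      rw [hb0B]; exact hSlt y hy
    · rintro ⟨h1, h2⟩
      obtain ⟨s1, hs1, hs1y⟩ := exists_lt_of_csInf_lt hne h1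
      obtain ⟨s2, hs2, hys2⟩ := exists_lt_of_lt_csSup hne h2
      exact hord.out hs1 hs2 ⟨hs1y.le, hys2.le⟩
  have ha0b0 : a0 < b0 := by
    obtain ⟨y0, hy0⟩ := hne
    have h1 := hlt_mem y0 hy0
    have h2 : y0 < b0 := by rw [hb0B]; exact hSlt y0 hy0
    linarith
  -- monotonicity of t ↦ F t x
  have hφmono : ∀ x : ℝ, StrictMono (fun t => FF (m+1) f t x) := by
    intro x t t' htt'
    have := FF_add m f hmono x htt'.le
    simp only
    linarith
  have hφcont : ∀ x : ℝ, Continuous (fun t => FF (m+1) f t x) := fun x =>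
    (FF_cont (m+1) f hcont).comp (continuous_id.prodMk continuous_const)
  have hex : ∀ x : ℝ, b0 ≤ x → ∃ t : ℝ, 0 < t ∧ FF (m+1) f t x = x := by
    intro x hx
    have hmem : FF (m+1) f 0 x - 0 ∈ S := ⟨0, x, le_rfl, rfl⟩
    have h0lt : FF (m+1) f 0 x - 0 < b0 := by rw [hb0B]; exact hSlt _ hmem
    have h0 : FF (m+1) f 0 x < x := by linarith
    set t1 := x - FF (m+1) f 0 x with ht1
    have ht1pos : 0 < t1 := by linarith
    have hH : x ≤ FF (m+1) f t1 x := by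
      have := FF_add m f hmono x ht1pos.le
      linarith
    obtain ⟨t, htmem, htx⟩ := intermediate_value_Icc ht1pos.le
      ((hφcont x).continuousOn) ⟨h0.le, hH⟩
    refine ⟨t, ?_, htx⟩
    rcases eq_or_lt_of_le htmem.1 with h | h
    · exfalso; rw [← h] at htx; simp only at htx; linarith
    · exact h
  set T : ℝ → ℝ := fun x => if h : b0 ≤ x then (hex x h).choose else 0 with hTdef
  have hT : ∀ x : ℝ, (h : b0 ≤ x) → 0 < T x ∧ FF (m+1) f (T x) x = x := by
    intro x h
    simp only [hTdef, dif_pos h]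
    exact (hex x h).choose_spec
  refine ⟨a0, b0, ha0b0, hSIoo, T, ?_, ?_, ?_⟩
  · intro x hx
    obtain ⟨hpos, heq⟩ := hT x hx
    refine ⟨hpos, heq, fun t ht htx => ?_⟩
    exact (hφmono x).injective (htx.trans heq.symm)
  · intro x hx
    obtain ⟨hpos, heq⟩ := hT x hx
    have hmem : FF (m+1) f (T x) x - T x ∈ S := ⟨T x, x, hpos.le, rfl⟩
    rw [heq] at hmem
    rw [hSIoo] at hmem
    exact hmem
  · intro x1 x2 hx1 h12
    have hx2 : b0 ≤ x2 := hx1.trans h12.le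
    obtain ⟨hp1, he1⟩ := hT x1 hx1
    obtain ⟨hp2, he2⟩ := hT x2 hx2
    have h00 : (⟨0, hn⟩ : Fin (m+1)) = 0 := rfl
    rw [h00]
    constructor
    · by_contra hcon
      push_neg at hcon
      have hf12 : f 0 x1 < f 0 x2 := hmono 0 h12
      have ht21 : T x2 ≤ T x1 := by linarith
      have hstep : FF (m+1) f (T x2) x2 ≤ FF (m+1) f (T x1) x1 := by
        rw [FF_succ (m) f (T x2) x2, FF_succ (m) f (T x1) x1]
        exact FF_mono m (fun i => f i.succ) (fun i => hmono i.succ) ht21 (by linarith)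
      rw [he1, he2] at hstep
      linarith
    · by_contra hcon
      push_neg at hcon
      have ht12 : T x1 ≤ T x2 := by linarith
      have hstep : FF (m+1) f (T x1) x2 + (T x2 - T x1) ≤ FF (m+1) f (T x2) x2 :=
        FF_add m f hmono x2 ht12
      have hsx : FF (m+1) f (T x1) x1 < FF (m+1) f (T x1) x2 :=
        FF_strictMono (m+1) f hmono (T x1) h12
      rw [he1] at hsx
      rw [he2] at hstep
      linarith
end

section
/- Let f, g ∈ Homeo⁺(S¹) have rational rotation numbers, let f_t be a positive one-parameter family commuting with f, and set g_t = f_t∘g. Suppose the rotation number of g_t is constant in t. Then the set P(f,g) of persistent periodic points satisfies P(f,g) = Per(g) ∩ ⋂_{k=0}^{q(g)−1} g^k(∂Per(f)). In particular, if rot(f) = 0, then every element of P(f,g) has a finite orbit under the group generated by f and g. -/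
open Set Function Filter MeasureTheory

section Aux

namespace HomeoZR

lemma surjective_toFun (f : HomeoZR) : Function.Surjective f.toFun :=
  fun y => ⟨f.invFun y, f.right_inv y⟩

lemma continuous_toFun (f : HomeoZR) : Continuous f.toFun :=
  (StrictMono.orderIsoOfSurjective _ f.strictMono f.surjective_toFun).continuous

@[simp] lemma toLift_apply (f : HomeoZR) (x : ℝ) : f.toLift x = f.toFun x := rfl

lemma toLift_pow (f : HomeoZR) (n : ℕ) : ⇑(f.toLift ^ n) = f.toFun^[n] := by
  rw [CircleDeg1Lift.coe_pow]; rfl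

lemma map_add_int' (f : HomeoZR) (x : ℝ) (m : ℤ) : f.toFun (x + m) = f.toFun x + m :=
  f.toLift.map_add_int x m

lemma iterate_add_int (f : HomeoZR) (n : ℕ) (x : ℝ) (m : ℤ) :
    f.toFun^[n] (x + m) = f.toFun^[n] x + m := by
  have h := (f.toLift ^ n).map_add_int x m
  rwa [toLift_pow] at h

lemma transNum_mul_of_iterate (f : HomeoZR) {n : ℕ} {x : ℝ} {m : ℤ}
    (h : f.toFun^[n] x = x + m) : (n : ℝ) * f.transNum = m := by
  have h' : (f.toLift ^ n) x = x + m := by rw [toLift_pow]; exact h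
  have h2 := CircleDeg1Lift.translationNumber_of_eq_add_int _ h'
  rwa [CircleDeg1Lift.translationNumber_pow] at h2

end HomeoZR

lemma fix_of_iterate_fix {φ : ℝ → ℝ} (h : StrictMono φ) {n : ℕ} (hn : 0 < n) {x : ℝ}
    (hx : φ^[n] x = x) : φ x = x := by
  rcases lt_trichotomy (φ x) x with hlt | heq | hgt
  · have key : ∀ k, φ^[k + 1] x < x := by
      intro k
      induction k with
      | zero => simpa using hlt
      | succ k ih =>
        have := h ih
        calc φ^[k + 1 + 1] x = φ (φ^[k + 1] x) := Function.iterate_succ_apply' _ _ _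
        _ < φ x := this
        _ < x := hlt
    obtain ⟨k, rfl⟩ := Nat.exists_eq_succ_of_ne_zero hn.ne'
    exact absurd hx (key k).ne
  · exact heq
  · have key : ∀ k, x < φ^[k + 1] x := by
      intro k
      induction k with
      | zero => simpa using hgt
      | succ k ih =>
        have := h ih
        rw [Function.iterate_succ_apply' φ (k+1)]
        exact hgt.trans this
    obtain ⟨k, rfl⟩ := Nat.exists_eq_succ_of_ne_zero hn.ne'
    exact absurd hx (key k).ne'

lemma iterate_of_eq_add {φ : ℝ → ℝ} (hcomm : ∀ z (m : ℤ), φ (z + m) = φ z + m) {x : ℝ} {c : ℤ}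
    (hx : φ x = x + c) : ∀ k : ℕ, φ^[k] x = x + ((k : ℤ) * c : ℤ) := by
  intro k
  induction k with
  | zero => simp
  | succ k ih =>
    rw [Function.iterate_succ_apply' φ k, ih, hcomm, hx]
    push_cast
    ring

end Aux

section Aux2

namespace HomeoZR

lemma q_spec (g : HomeoZR) (hg : RatRot g) :
    0 < g.q ∧ ∃ x : ℝ, ∃ m : ℤ, g.toFun^[g.q] x = x + m := by
  obtain ⟨r, hr⟩ := hg
  have hden : (0 : ℕ) < r.den := r.pos
  have htau : g.toLift.translationNumber = (r.num : ℝ) / (r.den : ℝ) := by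
    rw [show g.toLift.translationNumber = g.transNum from rfl, hr, Rat.cast_def]
  obtain ⟨x, hx⟩ :=
    (CircleDeg1Lift.translationNumber_eq_rat_iff g.toLift g.continuous_toFun hden).1 htau
  have hx' : g.toFun^[r.den] x = x + r.num := by rw [← toLift_pow]; exact hx
  have hne : {n : ℕ | 0 < n ∧ ∃ x : ℝ, ∃ m : ℤ, g.toFun^[n] x = x + m}.Nonempty :=
    ⟨r.den, hden, x, r.num, hx'⟩
  exact Nat.sInf_mem hne

lemma per_iterate (g : HomeoZR) (hg : RatRot g) {x : ℝ} (hx : x ∈ g.Per) :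
    g.toFun^[g.q] x = x + (((g.p : ℤ) + (g.q : ℤ) * ⌊g.transNum⌋ : ℤ) : ℝ) := by
  obtain ⟨hq, y, m', hy⟩ := g.q_spec hg
  obtain ⟨n, hn, m, hxn⟩ := hx
  -- translation numbers
  have hty : (g.q : ℝ) * g.transNum = m' := g.transNum_mul_of_iterate hy
  have htx : (n : ℝ) * g.transNum = m := g.transNum_mul_of_iterate hxn
  -- g^[q] x = x + m'
  have hcomm : ∀ z (k : ℤ), g.toFun^[g.q] (z + k) = g.toFun^[g.q] z + k :=
    fun z k => g.iterate_add_int _ z k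
  have hK : g.toFun^[g.q] x = x + m' := by
    set K : ℝ → ℝ := fun z => g.toFun^[g.q] z - m' with hKdef
    have hKmono : StrictMono K := fun a b hab => by
      simp only [hKdef]
      exact sub_lt_sub_right ((g.strictMono.iterate g.q) hab) _
    have hKit : ∀ j : ℕ, K^[j] x = g.toFun^[g.q * j] x - j * (m' : ℝ) := by
      intro j
      induction j with
      | zero => simp
      | succ j ih =>
        rw [Function.iterate_succ_apply' K j, ih]
        show g.toFun^[g.q] (g.toFun^[g.q * j] x - (j:ℝ) * (m':ℝ)) - (m':ℝ) = _
        rw [show g.toFun^[g.q * j] x - (j:ℝ) * (m':ℝ)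
              = g.toFun^[g.q * j] x + ((-((j:ℤ) * m') : ℤ) : ℝ) by push_cast; ring,
           hcomm, ← Function.iterate_add_apply,
           show g.q + g.q * j = g.q * (j + 1) by ring]
        push_cast
        ring
    -- K^[n] x = x
    have hgn : ∀ j : ℕ, (g.toFun^[n])^[j] x = x + ((j : ℤ) * m : ℝ) := by
      intro j
      have := iterate_of_eq_add (φ := g.toFun^[n]) (fun z k => g.iterate_add_int n z k)
        (c := m) hxn j
      exact_mod_cast this
    have hqn : g.toFun^[g.q * n] x = x + ((n : ℤ) * m' : ℝ) := by
      rw [mul_comm, Function.iterate_mul]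
      have h1 := hgn g.q
      rw [h1]
      congr 1
      -- (q*m : ℝ) = (n*m') since q * τ = m', n * τ = m
      have : (g.q : ℝ) * m = (n : ℝ) * m' := by
        rw [← htx, ← hty]; ring
      push_cast
      push_cast at this
      linarith
    have hKn : K^[n] x = x := by
      rw [hKit n, hqn]
      push_cast
      ring
    have := fix_of_iterate_fix hKmono hn hKn
    simp only [hKdef] at this
    linarith [this]
  -- now identify m' with p + q * floor τ
  have htau : g.transNum = (m' : ℝ) / (g.q : ℝ) := by
    field_simp at hty ⊢
    linarith [hty]
  have hqR : (0:ℝ) < (g.q : ℝ) := by exact_mod_cast hq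
  -- p membership set nonempty
  have hp0mem : ((m' % g.q).toNat) ∈ {p : ℕ | ∃ k : ℤ, g.transNum = (p : ℝ) / (g.q : ℝ) + (k : ℝ)} := by
    refine ⟨m' / (g.q : ℤ), ?_⟩
    rw [htau]
    have hmod : ((m' % (g.q : ℤ)).toNat : ℝ) = ((m' % (g.q : ℤ) : ℤ) : ℝ) := by
      exact_mod_cast Int.toNat_of_nonneg (Int.emod_nonneg m' (by exact_mod_cast hq.ne'))
    rw [hmod]
    field_simp
    have := Int.emod_add_mul_ediv m' (g.q : ℤ)
    have hcast : ((m' % (g.q:ℤ) : ℤ) : ℝ) + ((g.q : ℤ) : ℝ) * ((m' / (g.q:ℤ) : ℤ) : ℝ) = (m' : ℝ) := by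
      exact_mod_cast congrArg (fun z : ℤ => (z : ℝ)) this
    push_cast at hcast ⊢
    linarith
  have hpmem := Nat.sInf_mem ⟨_, hp0mem⟩
  obtain ⟨k, hk⟩ : ∃ k : ℤ, g.transNum = (g.p : ℝ) / (g.q : ℝ) + (k : ℝ) := hpmem
  have hple : g.p ≤ (m' % g.q).toNat := Nat.sInf_le hp0mem
  -- m' = p + q * k
  have hm' : m' = (g.p : ℤ) + (g.q : ℤ) * k := by
    have : (m' : ℝ) = (g.p : ℝ) + (g.q : ℝ) * k := by
      have := hk
      rw [htau] at this
      field_simp at this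
      linarith
    exact_mod_cast this
  -- p < q
  have hplt : (g.p : ℤ) < (g.q : ℤ) := by
    have h1 : (m' % (g.q:ℤ)) < (g.q : ℤ) := Int.emod_lt_of_pos m' (by exact_mod_cast hq)
    have h2 : ((m' % g.q).toNat : ℤ) = m' % (g.q : ℤ) :=
      Int.toNat_of_nonneg (Int.emod_nonneg m' (by exact_mod_cast hq.ne'))
    have := hple
    omega
  -- floor τ = k
  have hfloor : ⌊g.transNum⌋ = k := by
    have h0 : (0:ℝ) ≤ (g.p:ℝ)/(g.q:ℝ) := by positivity
    have h1 : (g.p:ℝ)/(g.q:ℝ) < 1 := by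
      rw [div_lt_one hqR]; exact_mod_cast hplt
    rw [hk, Int.floor_eq_iff]
    constructor
    · linarith
    · push_cast; linarith
  rw [hK, hm', hfloor]

end HomeoZR

end Aux2

section Aux3

namespace HomeoZR

lemma canon_strictMono (f : HomeoZR) : StrictMono f.canon := fun a b h =>
  sub_lt_sub_right (f.strictMono h) _

lemma canon_add_int (f : HomeoZR) (x : ℝ) (m : ℤ) : f.canon (x + m) = f.canon x + m := by
  unfold canon
  rw [f.map_add_int' x m]
  ring

lemma canon_iterate (g : HomeoZR) (j : ℕ) (x : ℝ) :
    g.canon^[j] x = g.toFun^[j] x - ((j : ℤ) * ⌊g.transNum⌋ : ℤ) := by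
  induction j with
  | zero => simp
  | succ j ih =>
    rw [Function.iterate_succ_apply' _ j, ih, Function.iterate_succ_apply' _ j]
    rw [show g.toFun^[j] x - (((j:ℤ) * ⌊g.transNum⌋ : ℤ) : ℝ)
          = g.toFun^[j] x + ((-((j:ℤ) * ⌊g.transNum⌋) : ℤ) : ℝ) by push_cast; ring]
    unfold canon
    rw [g.map_add_int']
    push_cast
    ring

lemma mem_Per_add_int (f : HomeoZR) {x : ℝ} (hx : x ∈ f.Per) (m : ℤ) : x + m ∈ f.Per := by
  obtain ⟨n, hn, k, hk⟩ := hx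
  exact ⟨n, hn, k, by rw [f.iterate_add_int, hk]; ring⟩

lemma Per_preimage_add (f : HomeoZR) (m : ℤ) :
    (fun z : ℝ => z + (m : ℝ)) ⁻¹' f.Per = f.Per := by
  ext z
  constructor
  · intro hz
    have := f.mem_Per_add_int hz (-m)
    simpa using this
  · intro hz
    exact f.mem_Per_add_int hz m

lemma frontier_add_int (f : HomeoZR) {y : ℝ} (hy : y ∈ frontier f.Per) (m : ℤ) :
    y + m ∈ frontier f.Per := by
  have h := (Homeomorph.addRight ((m : ℝ))).preimage_frontier f.Per
  have hco : ⇑(Homeomorph.addRight ((m : ℝ))) = fun z : ℝ => z + (m : ℝ) := rfl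
  rw [hco, Per_preimage_add] at h
  have : y ∈ (fun z : ℝ => z + (m : ℝ)) ⁻¹' frontier f.Per := by rw [h]; exact hy
  exact this

end HomeoZR

section Family

variable {f : HomeoZR} {F : ℝ → HomeoZR}

lemma F0_toFun (hF : PosFamily f F) : (F 0).toFun = _root_.id := by
  funext z
  have h := congrFun (hF.1 0 0) z
  rw [add_zero] at h
  exact ((F 0).strictMono.injective h.symm)

lemma F0_canon (hF : PosFamily f F) (z : ℝ) : (F 0).canon z = z := by
  have h1 : (F 0).toLift = 1 := by
    ext w
    show (F 0).toFun w = w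
    rw [F0_toFun hF]; rfl
  unfold HomeoZR.canon HomeoZR.transNum
  rw [F0_toFun hF, h1, CircleDeg1Lift.translationNumber_one]
  simp

lemma canon_frontier_fix (hF : PosFamily f F) (t : ℝ) {y : ℝ} (hy : y ∈ frontier f.Per) :
    (F t).canon y = y := by
  rcases eq_or_ne t 0 with rfl | ht
  · exact F0_canon hF y
  · have hfix : y ∈ (F t).FixS := by rw [hF.2.2.1 t ht]; exact hy
    obtain ⟨m, hm⟩ := hfix
    have htau : ((1 : ℕ) : ℝ) * (F t).transNum = m :=
      (F t).transNum_mul_of_iterate (by simpa using hm)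
    have htau' : (F t).transNum = m := by simpa using htau
    unfold HomeoZR.canon
    rw [hm, htau']
    simp

lemma canon_le_of_pos (hF : PosFamily f F) {t : ℝ} (ht : 0 < t) (y : ℝ) :
    y ≤ (F t).canon y := by
  by_cases hy : y ∈ frontier f.Per
  · rw [canon_frontier_fix hF t hy]
  · exact (hF.2.2.2 t ht y hy).le

/-- The squeeze lemma: if the perturbed orbit agrees with the unperturbed one at time `q`,
then all the intermediate points lie on the frontier. -/
lemma squeeze (hF : PosFamily f F) (g : HomeoZR) {x : ℝ} :
    ∀ n : ℕ, (((F 1).canon ∘ g.canon)^[n] x = g.canon^[n] x) →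
      ∀ k ≤ n, ((F 1).canon ∘ g.canon)^[k] x = g.canon^[k] x ∧
        (1 ≤ k → g.canon^[k] x ∈ frontier f.Per) := by
  have hle : ∀ k : ℕ, g.canon^[k] x ≤ ((F 1).canon ∘ g.canon)^[k] x := by
    intro k
    induction k with
    | zero => exact le_rfl
    | succ k ih =>
      rw [Function.iterate_succ_apply' _ k, Function.iterate_succ_apply' _ k]
      calc g.canon (g.canon^[k] x) ≤ g.canon (((F 1).canon ∘ g.canon)^[k] x) :=
            (g.canon_strictMono.monotone ih)
      _ ≤ ((F 1).canon ∘ g.canon) (((F 1).canon ∘ g.canon)^[k] x) :=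
            canon_le_of_pos hF one_pos _
  intro n
  induction n with
  | zero =>
    intro _ k hk
    interval_cases k
    exact ⟨rfl, by omega⟩
  | succ n ih =>
    intro hn k hk
    -- first derive equality at level n and frontier at level n+1
    have ha : ((F 1).canon ∘ g.canon)^[n+1] x
        = (F 1).canon (g.canon (((F 1).canon ∘ g.canon)^[n] x)) := by
      rw [Function.iterate_succ_apply' _ n]; rfl
    have hb : g.canon^[n+1] x = g.canon (g.canon^[n] x) := Function.iterate_succ_apply' _ n _
    have h1 : g.canon (g.canon^[n] x) ≤ g.canon (((F 1).canon ∘ g.canon)^[n] x) :=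
      g.canon_strictMono.monotone (hle n)
    have h2 : g.canon (((F 1).canon ∘ g.canon)^[n] x)
        ≤ (F 1).canon (g.canon (((F 1).canon ∘ g.canon)^[n] x)) :=
      canon_le_of_pos hF one_pos _
    have hEq : g.canon (((F 1).canon ∘ g.canon)^[n] x) = g.canon (g.canon^[n] x) := by
      rw [← hb]
      rw [hn] at ha
      linarith [ha.symm.le, ha.symm.ge]
    have hfixed : (F 1).canon (g.canon (((F 1).canon ∘ g.canon)^[n] x))
        = g.canon (((F 1).canon ∘ g.canon)^[n] x) := by
      rw [← ha, hn, hb, hEq]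
    have hfront : g.canon (((F 1).canon ∘ g.canon)^[n] x) ∈ frontier f.Per := by
      by_contra hnot
      exact absurd hfixed.symm (ne_of_lt (hF.2.2.2 1 one_pos _ hnot))
    have heqn : ((F 1).canon ∘ g.canon)^[n] x = g.canon^[n] x :=
      g.canon_strictMono.injective hEq
    have hfront' : g.canon^[n+1] x ∈ frontier f.Per := by
      rw [hb, ← heqn]; rw [heqn] at hfront; rwa [heqn] at hEq ⊢ <;> skip
    rcases Nat.lt_or_ge k (n+1) with hk' | hk'
    · exact ih heqn k (by omega)
    · have : k = n + 1 := by omega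
      subst this
      exact ⟨hn, fun _ => hfront'⟩

lemma iterate_eq_of_frontier (hF : PosFamily f F) (g : HomeoZR) (t : ℝ) {x : ℝ} {q : ℕ}
    (hfr : ∀ j, 1 ≤ j → j ≤ q → g.canon^[j] x ∈ frontier f.Per) :
    ∀ k ≤ q, ((F t).canon ∘ g.canon)^[k] x = g.canon^[k] x := by
  intro k
  induction k with
  | zero => intro _; rfl
  | succ k ih =>
    intro hk
    have h1 := ih (by omega)
    rw [Function.iterate_succ_apply' _ k, Function.iterate_succ_apply' _ k, h1]
    show (F t).canon (g.canon (g.canon^[k] x)) = _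
    rw [← Function.iterate_succ_apply' g.canon k]
    exact canon_frontier_fix hF t (hfr (k+1) (by omega) hk)

end Family

end Aux3

section Aux4

lemma rhs_frontier (f g : HomeoZR) {x : ℝ} {M : ℤ} (hq : 0 < g.q)
    (hper : g.toFun^[g.q] x = x + M)
    (hint : ∀ k < g.q, x ∈ g.toFun^[k] '' frontier f.Per) :
    ∀ j ≤ g.q, g.toFun^[j] x ∈ frontier f.Per := by
  intro j hj
  rcases Nat.eq_zero_or_pos j with rfl | hj1
  · have h0 := hint 0 hq
    simpa using h0
  · obtain ⟨y, hyfr, hyx⟩ := hint (g.q - j) (by omega)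
    -- g^[q] y = y + M
    have hqy : g.toFun^[g.q] y = y + M := by
      have h1 : g.toFun^[g.q - j] (g.toFun^[g.q] y) = g.toFun^[g.q] (g.toFun^[g.q - j] y) := by
        rw [← Function.iterate_add_apply, ← Function.iterate_add_apply, Nat.add_comm]
      apply (g.strictMono.iterate (g.q - j)).injective
      rw [g.iterate_add_int (g.q - j) y M, h1, hyx, hper]
    have : g.toFun^[j] x = y + M := by
      rw [← hyx, ← Function.iterate_add_apply, show j + (g.q - j) = g.q by omega, hqy]
    rw [this]
    exact f.frontier_add_int hyfr M

end Aux4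

section Aux5

lemma frontier_fix_of_int (f : HomeoZR) {mf : ℤ} (hmf : f.transNum = (mf : ℝ)) :
    ∀ y ∈ frontier f.Per, f.toFun y = y + mf := by
  have hsub : f.Per ⊆ {z : ℝ | f.toFun z = z + mf} := by
    intro z hz
    obtain ⟨n, hn, m, hznm⟩ := hz
    have htn : (n : ℝ) * f.transNum = m := f.transNum_mul_of_iterate hznm
    have hm : (m : ℝ) = (n : ℝ) * mf := by rw [← htn, hmf]
    set K : ℝ → ℝ := fun w => f.toFun w - mf with hKdef
    have hKmono : StrictMono K := fun a b hab => sub_lt_sub_right (f.strictMono hab) _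
    have hKit : ∀ j : ℕ, K^[j] z = f.toFun^[j] z - (j : ℝ) * mf := by
      intro j
      induction j with
      | zero => simp
      | succ j ih =>
        rw [Function.iterate_succ_apply' K j, ih]
        show f.toFun (f.toFun^[j] z - (j:ℝ)*mf) - (mf:ℝ) = _
        rw [show f.toFun^[j] z - (j:ℝ)*(mf:ℝ)
              = f.toFun^[j] z + ((-((j:ℤ) * mf) : ℤ) : ℝ) by push_cast; ring,
          f.map_add_int', Function.iterate_succ_apply' f.toFun j]
        push_cast
        ring
    have hKn : K^[n] z = z := by rw [hKit n, hznm, hm]; ring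
    have hfix := fix_of_iterate_fix hKmono hn hKn
    have hfix' : f.toFun z - mf = z := hfix
    simp only [Set.mem_setOf_eq]
    linarith
  have hclosed : IsClosed {z : ℝ | f.toFun z = z + mf} := by
    have hset : {z : ℝ | f.toFun z = z + mf} = (fun z => f.toFun z - z) ⁻¹' {(mf:ℝ)} := by
      ext z
      simp only [Set.mem_setOf_eq, Set.mem_preimage, Set.mem_singleton_iff]
      constructor <;> intro h <;> linarith
    rw [hset]
    exact IsClosed.preimage (f.continuous_toFun.sub continuous_id) isClosed_singleton
  intro y hy
  exact closure_minimal hsub hclosed (frontier_subset_closure hy)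

end Aux5

/-- Lemma 2.5 (1). `P(f,g) = Per(g) ∩ ⋂_{k<q(g)} g^k(∂Per f)`; in
particular if `rot(f) = 0` then every element of `P(f,g)` has finite orbit under
`⟨f,g⟩`. -/
theorem persistent_periodic_points (f g : HomeoZR)
    (hf : RatRot f) (hg : RatRot g)
    (F : ℝ → HomeoZR) (hF : PosFamily f F)
    (hconst : ∀ t : ℝ, ∃ m : ℤ, ((F t).comp g).transNum = g.transNum + m) :
    (Pset F g = g.Per ∩ ⋂ k ∈ Finset.range g.q, g.toFun^[k] '' frontier f.Per) ∧
    ((∃ m : ℤ, f.transNum = (m : ℝ)) → ∀ x ∈ Pset F g, FiniteOrbit f g x) := by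
  obtain ⟨hq, -⟩ := g.q_spec hg
  have hcanon0 : (F 0).canon ∘ g.canon = g.canon := funext fun z => F0_canon hF _
  have main : Pset F g = g.Per ∩ ⋂ k ∈ Finset.range g.q, g.toFun^[k] '' frontier f.Per := by
    apply Set.Subset.antisymm
    · intro x hx
      have hx' : ∀ t, delta F g x t = 0 := hx
      have h0 := hx' 0
      unfold delta at h0
      rw [hcanon0] at h0
      have hG0 : g.canon^[g.q] x = x + g.p := by linarith
      have hgq : g.toFun^[g.q] x = x + (((g.p : ℤ) + (g.q : ℤ) * ⌊g.transNum⌋ : ℤ) : ℝ) := by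
        have hci := g.canon_iterate g.q x
        rw [hci] at hG0
        push_cast at hG0 ⊢
        linarith
      have hxPer : x ∈ g.Per := ⟨g.q, hq, _, hgq⟩
      have h1 := hx' 1
      unfold delta at h1
      have h1' : ((F 1).canon ∘ g.canon)^[g.q] x = g.canon^[g.q] x := by
        rw [hG0]; linarith
      have hfrc : ∀ j, 1 ≤ j → j ≤ g.q → g.canon^[j] x ∈ frontier f.Per :=
        fun j h1j hjq => (squeeze hF g g.q h1' j hjq).2 h1j
      have hx0 : x ∈ frontier f.Per := by
        have hq1 := hfrc g.q (by omega) le_rfl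
        have h2 := f.frontier_add_int hq1 (-(g.p : ℤ))
        rw [hG0] at h2
        simpa using h2
      have hfrg : ∀ j ≤ g.q, g.toFun^[j] x ∈ frontier f.Per := by
        intro j hj
        rcases Nat.eq_zero_or_pos j with rfl | hj1
        · simpa using hx0
        · have h := hfrc j hj1 hj
          have h2 := f.frontier_add_int h ((j : ℤ) * ⌊g.transNum⌋)
          rw [g.canon_iterate j x] at h2
          simpa using h2
      refine ⟨hxPer, ?_⟩
      refine Set.mem_iInter₂.2 fun k hk => ?_
      rw [Finset.mem_range] at hk
      refine ⟨g.toFun^[g.q - k] x + ((-((g.p : ℤ) + (g.q : ℤ) * ⌊g.transNum⌋) : ℤ) : ℝ),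
        f.frontier_add_int (hfrg _ (by omega)) _, ?_⟩
      rw [g.iterate_add_int, ← Function.iterate_add_apply,
        show k + (g.q - k) = g.q by omega, hgq]
      push_cast
      ring
    · intro x hx
      obtain ⟨hxPer, hxInt⟩ := hx
      have hint : ∀ k < g.q, x ∈ g.toFun^[k] '' frontier f.Per := fun k hk =>
        Set.mem_iInter₂.1 hxInt k (Finset.mem_range.2 hk)
      have hgq := g.per_iterate hg hxPer
      have hfrg := rhs_frontier f g hq hgq hint
      have hfrc : ∀ j, 1 ≤ j → j ≤ g.q → g.canon^[j] x ∈ frontier f.Per := by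
        intro j h1j hjq
        have h2 := f.frontier_add_int (hfrg j hjq) (-((j : ℤ) * ⌊g.transNum⌋))
        rw [g.canon_iterate j x]
        rw [show g.toFun^[j] x - (((j:ℤ) * ⌊g.transNum⌋ : ℤ) : ℝ)
              = g.toFun^[j] x + ((-((j:ℤ) * ⌊g.transNum⌋) : ℤ) : ℝ) by push_cast; ring]
        exact h2
      intro t
      show delta F g x t = 0
      unfold delta
      rw [iterate_eq_of_frontier hF g t hfrc g.q le_rfl, g.canon_iterate g.q x, hgq]
      push_cast
      ring
  refine ⟨main, ?_⟩
  rintro ⟨mf, hmf⟩ x hx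
  rw [main] at hx
  obtain ⟨hxPer, hxInt⟩ := hx
  have hint : ∀ k < g.q, x ∈ g.toFun^[k] '' frontier f.Per := fun k hk =>
    Set.mem_iInter₂.1 hxInt k (Finset.mem_range.2 hk)
  have hgq := g.per_iterate hg hxPer
  have hfrg := rhs_frontier f g hq hgq hint
  have hfix := frontier_fix_of_int f hmf
  refine ⟨(fun k => g.toFun^[k] x) '' Set.Iio g.q, (Set.finite_Iio _).image _,
    ⟨0, hq, rfl⟩, ?_, ?_⟩
  · rintro y ⟨k, hk, rfl⟩
    exact ⟨g.toFun^[k] x, ⟨k, hk, rfl⟩, mf, hfix _ (hfrg k (le_of_lt hk))⟩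
  · rintro y ⟨k, hk, rfl⟩
    rcases Nat.lt_or_ge (k + 1) g.q with h | h
    · refine ⟨g.toFun^[k+1] x, ⟨k+1, h, rfl⟩, 0, ?_⟩
      rw [← Function.iterate_succ_apply' g.toFun k]
      simp
    · have hkq : k + 1 = g.q := by
        have : k < g.q := hk
        omega
      refine ⟨x, ⟨0, hq, rfl⟩, ((g.p : ℤ) + (g.q : ℤ) * ⌊g.transNum⌋), ?_⟩
      rw [← Function.iterate_succ_apply' g.toFun k,
        show k.succ = g.q from hkq, hgq]
end
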